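/- arXiv:2502.11952 — 2 statements merged into one kernel-verified Lean document; each statement's English description precedes it below -/
import Mathlib

section
/- Let r > 1 be an integer, let φ be a discrete kernel and ψ a continuous kernel satisfying assumptions (i) and (ii), and suppose all the moments appearing below are finite. Then for every f ∈ W^{r,p}(ℝ) with 1 ≤ p < +∞ (or f ∈ C^r(ℝ) when p = +∞), every w > 0 and every x ∈ ℝ, the Taylor expansion of the operator holds: (D_w^{φ,ψ} f)(x) = f(x) + Σ_{k∈ℤ} φ(wx−k) · w ∫_ℝ ψ(wu−k) [ ∫_x^u (f^{(r)}(t)/(r−1)!) (u−t)^{r−1} dt ] du, i.e., all intermediate terms of orders 1,…,r−1 in the Taylor expansion with integral remainder cancel. -/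
open MeasureTheory Filter Set
open scoped ENNReal BigOperators

/-- The Durrmeyer sampling operator based upon the kernels `φ` (discrete) and `ψ` (continuous). -/
noncomputable def durr (φ ψ : ℝ → ℝ) (w : ℝ) (f : ℝ → ℝ) (x : ℝ) : ℝ :=
  ∑' k : ℤ, φ (w * x - k) * (w * ∫ u : ℝ, ψ (w * u - k) * f u)

/-- A discrete kernel: bounded, integrable, with `∑_{k∈ℤ} φ(u-k) = 1` for all `u`. -/
structure IsDiscreteKernel (φ : ℝ → ℝ) : Prop where
  integrable : Integrable φ
  bounded : ∃ M : ℝ, ∀ x : ℝ, |φ x| ≤ M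
  partition : ∀ u : ℝ, HasSum (fun k : ℤ => φ (u - k)) 1

/-- A continuous kernel: integrable, bounded near `0`, with `∫ ψ = 1`. -/
structure IsContinuousKernel (ψ : ℝ → ℝ) : Prop where
  integrable : Integrable ψ
  boundedNearZero : ∃ δ : ℝ, 0 < δ ∧ ∃ M : ℝ, ∀ u : ℝ, |u| ≤ δ → |ψ u| ≤ M
  integral_one : (∫ u : ℝ, ψ u) = 1

/-- Discrete algebraic moment `m_ν(φ,u)`. -/
noncomputable def discMoment (φ : ℝ → ℝ) (ν : ℕ) (u : ℝ) : ℝ :=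
  ∑' k : ℤ, φ (u - k) * ((k : ℝ) - u) ^ ν

/-- Continuous algebraic moment `m̃_ν(ψ)`. -/
noncomputable def contMoment (ψ : ℝ → ℝ) (ν : ℕ) : ℝ :=
  ∫ u : ℝ, u ^ ν * ψ u

/-- Discrete absolute moment `M_ν(φ)` (of real order `ν`), valued in `ℝ≥0∞`. -/
noncomputable def discAbsMoment (φ : ℝ → ℝ) (ν : ℝ) : ℝ≥0∞ :=
  ⨆ u : ℝ, ∑' k : ℤ, ENNReal.ofReal (|φ (u - k)| * |u - (k : ℝ)| ^ ν)

/-- Continuous absolute moment `M̃_ν(ψ)` (of real order `ν`), valued in `ℝ≥0∞`. -/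
noncomputable def contAbsMoment (ψ : ℝ → ℝ) (ν : ℝ) : ℝ≥0∞ :=
  ∫⁻ u : ℝ, ENNReal.ofReal (|u| ^ ν * |ψ u|)

/-- Condition `(Θ)`: `ξ(u) = O(|u|^{-θ})` as `|u| → +∞`. -/
def CondTheta (ξ : ℝ → ℝ) (θ : ℝ) : Prop :=
  ∃ C R : ℝ, 0 < R ∧ ∀ u : ℝ, R ≤ |u| → |ξ u| ≤ C * |u| ^ (-θ)

/-- Assumption (i): the algebraic moments `m_ν(φ,u)`, `ν = 1,…,r`, do not depend on `u`. -/
def AssumptionI (φ : ℝ → ℝ) (r : ℕ) : Prop :=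
  ∀ ν : ℕ, 1 ≤ ν → ν ≤ r → ∀ u v : ℝ, discMoment φ ν u = discMoment φ ν v

/-- Assumption (ii) (Strang–Fix type / vanishing moment condition of Durrmeyer type). -/
def AssumptionII (φ ψ : ℝ → ℝ) (r : ℕ) : Prop :=
  ∀ i : ℕ, 1 ≤ i → i ≤ r - 1 →
    ∑ ν ∈ Finset.range (i + 1),
      (i.choose ν : ℝ) * discMoment φ (i - ν) 0 * contMoment ψ ν = 0

/-- The `L^p`-norm (`p ∈ [1,∞]`, as an extended nonneg real) of `f : ℝ → ℝ`. -/
noncomputable def lpN (p : ℝ≥0∞) (f : ℝ → ℝ) : ℝ≥0∞ := eLpNorm f p volume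

/-- The `r`-th modulus of smoothness `ω_r(f,δ)_p`. -/
noncomputable def modulus (r : ℕ) (p : ℝ≥0∞) (f : ℝ → ℝ) (δ : ℝ) : ℝ≥0∞ :=
  ⨆ t : {t : ℝ // |t| ≤ δ},
    lpN p (fun x => ∑ j ∈ Finset.range (r + 1),
      (-1 : ℝ) ^ (r - j) * (r.choose j : ℝ) * f (x + (j : ℝ) * (t : ℝ)))

/-- The generalized Lipschitz class `Lip*(α, L^p)`: `f ∈ L^p` with
`ω_{⌊α⌋+1}(f,δ)_p = O(δ^α)` as `δ → 0⁺`. -/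
def LipStar (α : ℝ) (p : ℝ≥0∞) (f : ℝ → ℝ) : Prop :=
  MemLp f p volume ∧
    ∃ C : ℝ, 0 < C ∧ ∃ δ₀ : ℝ, 0 < δ₀ ∧ ∀ δ : ℝ, 0 < δ → δ ≤ δ₀ →
      modulus (⌊α⌋₊ + 1) p f δ ≤ ENNReal.ofReal (C * δ ^ α)

/-- `‖D_w^{φ,ψ} f − f‖_p = O(w^{−β})` as `w → +∞`. -/
def durrBigO (φ ψ : ℝ → ℝ) (p : ℝ≥0∞) (f : ℝ → ℝ) (β : ℝ) : Prop :=
  ∃ C : ℝ, 0 < C ∧ ∃ W : ℝ, 0 < W ∧ ∀ w : ℝ, W ≤ w →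
    lpN p (fun x => durr φ ψ w f x - f x) ≤ ENNReal.ofReal (C * w ^ (-β))

/-- Membership in `C(ℝ)`: uniformly continuous and bounded. -/
def ContBdd (f : ℝ → ℝ) : Prop :=
  UniformContinuous f ∧ ∃ M : ℝ, ∀ x : ℝ, |f x| ≤ M

/-- Membership in the Sobolev space `W^{r,p}(ℝ)`. -/
def MemSobolev (r : ℕ) (p : ℝ≥0∞) (f : ℝ → ℝ) : Prop :=
  MemLp f p volume ∧ (∀ i < r, Differentiable ℝ (iteratedDeriv i f)) ∧
    MemLp (iteratedDeriv r f) p volume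

/-- Membership in `C^r(ℝ)`: `r`-fold differentiable with `f, f', …, f^{(r)}` in `C(ℝ)`. -/
def MemCr (r : ℕ) (f : ℝ → ℝ) : Prop :=
  (∀ i < r, Differentiable ℝ (iteratedDeriv i f)) ∧
    ∀ i ≤ r, ContBdd (iteratedDeriv i f)

set_option maxHeartbeats 1000000
section Helpers
open intervalIntegral


lemma summable_of_tsum_ofReal {ι : Type*} [Countable ι] {a : ι → ℝ}
    (h : ∑' k, ENNReal.ofReal (a k) ≠ ⊤) (h0 : ∀ k, 0 ≤ a k) : Summable a := by
  have h1 : Summable (fun k => (a k).toNNReal) :=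
    ENNReal.tsum_coe_ne_top_iff_summable.1 (by simpa [ENNReal.ofReal] using h)
  exact (NNReal.summable_coe.2 h1).congr (fun k => Real.coe_toNNReal _ (h0 k))

lemma taylor_int {f : ℝ → ℝ} {r : ℕ} (hr : 1 ≤ r)
    (hd : ∀ i < r, Differentiable ℝ (iteratedDeriv i f))
    (hint : ∀ n, 1 ≤ n → n ≤ r → ∀ a b : ℝ, IntervalIntegrable (iteratedDeriv n f) volume a b)
    (x u : ℝ) :
    f u = (∑ i ∈ Finset.range r, iteratedDeriv i f x / (Nat.factorial i : ℝ) * (u - x) ^ i)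
      + ∫ t in x..u, iteratedDeriv r f t / (Nat.factorial (r-1) : ℝ) * (u - t) ^ (r-1) := by
  have key : ∀ n, 1 ≤ n → n ≤ r →
      f u = (∑ i ∈ Finset.range n, iteratedDeriv i f x / (Nat.factorial i : ℝ) * (u - x) ^ i)
        + ∫ t in x..u, iteratedDeriv n f t / (Nat.factorial (n-1) : ℝ) * (u - t) ^ (n-1) := by
    intro n hn1 hnr
    induction n with
    | zero => omega
    | succ m ih =>
      rcases Nat.eq_zero_or_pos m with hm | hm
      · subst hm
        have hFTC : ∫ t in x..u, deriv f t = f u - f x := by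
          refine integral_deriv_eq_sub (fun t _ => ?_) ?_
          · have := hd 0 hr; rw [iteratedDeriv_zero] at this; exact this.differentiableAt
          · have := hint 1 le_rfl hnr x u; rwa [iteratedDeriv_one] at this
        have heq : (∫ t in x..u, iteratedDeriv (0+1) f t / (Nat.factorial (0+1-1) : ℝ) * (u - t) ^ (0+1-1))
            = f u - f x := by
          rw [← hFTC]
          refine intervalIntegral.integral_congr (fun t _ => ?_)
          norm_num [iteratedDeriv_one]
        rw [heq]
        simp [iteratedDeriv_zero]
      · have hm1 : 1 ≤ m := hm
        have hmr : m ≤ r := le_trans (Nat.le_succ m) hnr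
        have ihm := ih hm1 hmr
        have hmlt : m < r := lt_of_lt_of_le (Nat.lt_succ_self m) hnr
        -- integration by parts step
        have hu' : IntervalIntegrable (iteratedDeriv (m+1) f) volume x u :=
          hint (m+1) (Nat.le_add_left 1 m) hnr x u
        have hv : ∀ t : ℝ, HasDerivAt (fun s => -((u - s)^m / (Nat.factorial m : ℝ)))
            ((u - t)^(m-1) / (Nat.factorial (m-1) : ℝ)) t := by
          intro t
          have h1 : HasDerivAt (fun s : ℝ => (u - s)^m) ((m:ℝ) * (u - t)^(m-1) * (-1)) t :=
            (((hasDerivAt_id t).const_sub u)).pow m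
          have h2 := (h1.div_const (Nat.factorial m : ℝ)).fun_neg
          refine h2.congr_deriv ?_
          have hfac : (Nat.factorial m : ℝ) = (m : ℝ) * (Nat.factorial (m-1) : ℝ) := by
            rw [← Nat.cast_mul, ← Nat.succ_pred_eq_of_pos hm]
            simp [Nat.factorial_succ]
          rw [hfac]
          have hmne : (m:ℝ) ≠ 0 := by positivity
          field_simp
        have hparts := intervalIntegral.integral_mul_deriv_eq_deriv_mul
          (u := iteratedDeriv m f) (u' := iteratedDeriv (m+1) f)
          (v := fun s => -((u - s)^m / (Nat.factorial m : ℝ)))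
          (v' := fun t => (u - t)^(m-1) / (Nat.factorial (m-1) : ℝ))
          (fun t _ => by
            rw [iteratedDeriv_succ]
            exact ((hd m hmlt) t).hasDerivAt)
          (fun t _ => hv t) hu'
          ((by continuity : Continuous fun t : ℝ => (u - t)^(m-1) / (Nat.factorial (m-1) : ℝ)).intervalIntegrable x u)
        have hzero : (u - u)^m = 0 := by
          rw [sub_self]; exact zero_pow (by omega)
        rw [ihm]
        clear ih
        have hL : (∫ t in x..u, iteratedDeriv m f t / (Nat.factorial (m-1) : ℝ) * (u - t) ^ (m-1))
            = ∫ t in x..u, iteratedDeriv m f t * ((u - t)^(m-1) / (Nat.factorial (m-1) : ℝ)) := by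
          refine intervalIntegral.integral_congr (fun t _ => ?_); ring
        have hR' : (∫ t in x..u, iteratedDeriv (m+1) f t * ((u - t)^m / (Nat.factorial m : ℝ)))
            = ∫ t in x..u, iteratedDeriv (m+1) f t / (Nat.factorial ((m+1)-1) : ℝ) * (u - t) ^ ((m+1)-1) := by
          refine intervalIntegral.integral_congr (fun t _ => ?_)
          simp only [Nat.add_sub_cancel]
          ring
        rw [hL, hparts, Finset.sum_range_succ]
        simp only [hzero, mul_neg, neg_neg, zero_div, neg_zero, mul_zero,
          intervalIntegral.integral_neg, sub_neg_eq_add]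
        rw [hR']
        ring
  exact key r hr le_rfl


lemma integral_comp_affine (g : ℝ → ℝ) {w : ℝ} (hw : 0 < w) (k : ℝ) :
    ∫ u : ℝ, g (w * u - k) = w⁻¹ * ∫ v : ℝ, g v := by
  have h1 : (∫ u : ℝ, g (w * u - k)) = ∫ u : ℝ, (fun v => g (v - k)) (w * u) := rfl
  rw [h1, MeasureTheory.Measure.integral_comp_mul_left (fun v => g (v - k)) w,
    integral_sub_right_eq_self g k, abs_of_pos (inv_pos.2 hw), smul_eq_mul]

lemma integrable_comp_affine {g : ℝ → ℝ} (hg : Integrable g) {w : ℝ} (hw : w ≠ 0) (k : ℝ) :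
    Integrable (fun u : ℝ => g (w * u - k)) :=
  (hg.comp_sub_right k).comp_mul_left' hw

lemma psi_moment_integrable {ψ : ℝ → ℝ} (hmeas : AEStronglyMeasurable ψ volume) {ν : ℕ}
    (h : (∫⁻ u : ℝ, ENNReal.ofReal (|u| ^ (ν : ℝ) * |ψ u|)) < ⊤) :
    Integrable (fun u : ℝ => |u| ^ ν * |ψ u|) := by
  refine ⟨((continuous_abs.pow ν).aestronglyMeasurable.mul hmeas.norm).congr ?_, ?_⟩
  · filter_upwards with u; simp [Real.norm_eq_abs]
  · rw [hasFiniteIntegral_iff_norm]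
    have heq : ∀ u : ℝ, ENNReal.ofReal ‖|u| ^ ν * |ψ u|‖ = ENNReal.ofReal (|u| ^ (ν : ℝ) * |ψ u|) := by
      intro u
      rw [Real.norm_of_nonneg (by positivity), Real.rpow_natCast]
    simpa only [heq] using h

lemma memLp_intervalIntegrable {g : ℝ → ℝ} {q : ℝ≥0∞} (hq : 1 ≤ q) (h : MemLp g q volume)
    (a b : ℝ) : IntervalIntegrable g volume a b := by
  rw [intervalIntegrable_iff]
  haveI : IsFiniteMeasure (volume.restrict (Set.uIoc a b)) := by
    constructor
    rw [Measure.restrict_apply_univ]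
    exact measure_Ioc_lt_top
  exact (h.restrict _).integrable hq

lemma L1_interval_bound {g : ℝ → ℝ} {q : ℝ≥0∞} (hq : 1 ≤ q) (h : MemLp g q volume) :
    ∃ K : ℝ, 0 ≤ K ∧ ∀ a b : ℝ, a ≤ b →
      (∫ t in Set.Icc a b, |g t|) ≤ K * (1 + (b - a)) := by
  refine ⟨(eLpNorm g q volume).toReal, ENNReal.toReal_nonneg, fun a b hab => ?_⟩
  set μI := volume.restrict (Set.Icc a b) with hμI
  haveI : IsFiniteMeasure μI := by
    constructor
    rw [hμI, Measure.restrict_apply_univ]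
    exact measure_Icc_lt_top
  have hres : MemLp g q μI := h.restrict _
  have hint : Integrable g μI := hres.integrable hq
  set e : ℝ := 1 / (1 : ℝ≥0∞).toReal - 1 / q.toReal with he
  have he0 : 0 ≤ e := by
    rw [he]
    rcases eq_or_ne q ⊤ with hq' | hq'
    · simp [hq']
    · have : 1 ≤ q.toReal := by
        rw [← ENNReal.toReal_one]
        exact ENNReal.toReal_mono hq' hq
      have hqpos : 0 < q.toReal := lt_of_lt_of_le one_pos this
      have h2 := one_div_le_one_div_of_le one_pos this
      simp only [ENNReal.toReal_one]
      rw [sub_nonneg]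
      simpa using h2
  have he1 : e ≤ 1 := by
    rw [he]; simp only [ENNReal.toReal_one]
    have : 0 ≤ 1 / q.toReal := by positivity
    linarith
  have h1 : eLpNorm g 1 μI ≤ eLpNorm g q μI * (μI Set.univ) ^ e :=
    eLpNorm_le_eLpNorm_mul_rpow_measure_univ hq hres.aestronglyMeasurable
  have h2 : (μI Set.univ) ^ e ≤ ENNReal.ofReal (1 + (b - a)) := by
    have hμ : μI Set.univ = ENNReal.ofReal (b - a) := by
      rw [hμI, Measure.restrict_apply_univ, Real.volume_Icc]
    rw [hμ]
    rcases le_or_gt (ENNReal.ofReal (b - a)) 1 with hle | hlt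
    · calc (ENNReal.ofReal (b - a)) ^ e ≤ 1 := ENNReal.rpow_le_one hle he0
        _ ≤ ENNReal.ofReal (1 + (b - a)) := by
          rw [show (1:ℝ≥0∞) = ENNReal.ofReal 1 by simp]
          exact ENNReal.ofReal_le_ofReal (by linarith)
    · calc (ENNReal.ofReal (b - a)) ^ e ≤ (ENNReal.ofReal (b - a)) ^ (1:ℝ) :=
            ENNReal.rpow_le_rpow_of_exponent_le hlt.le he1
        _ = ENNReal.ofReal (b - a) := ENNReal.rpow_one _
        _ ≤ ENNReal.ofReal (1 + (b - a)) := ENNReal.ofReal_le_ofReal (by linarith)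
  have h3 : eLpNorm g q μI ≤ eLpNorm g q volume :=
    eLpNorm_mono_measure g Measure.restrict_le_self
  have h4 : eLpNorm g 1 μI ≤ eLpNorm g q volume * ENNReal.ofReal (1 + (b - a)) :=
    le_trans h1 (mul_le_mul' h3 h2)
  have hfin : eLpNorm g q volume * ENNReal.ofReal (1 + (b - a)) ≠ ⊤ :=
    ENNReal.mul_ne_top h.2.ne ENNReal.ofReal_ne_top
  have h5 : (∫ t in Set.Icc a b, |g t|) = (eLpNorm g 1 μI).toReal := by
    rw [eLpNorm_one_eq_lintegral_enorm]
    have := integral_norm_eq_lintegral_enorm (μ := μI) hres.aestronglyMeasurable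
    simp only [Real.norm_eq_abs] at this
    exact this
  rw [h5]
  calc (eLpNorm g 1 μI).toReal ≤ (eLpNorm g q volume * ENNReal.ofReal (1 + (b - a))).toReal :=
        ENNReal.toReal_mono hfin h4
    _ = (eLpNorm g q volume).toReal * (1 + (b - a)) := by
        rw [ENNReal.toReal_mul, ENNReal.toReal_ofReal (by linarith)]


lemma remainder_repr {f : ℝ → ℝ} {r : ℕ} (hr : 1 ≤ r)
    (hint : ∀ a b : ℝ, IntervalIntegrable (iteratedDeriv r f) volume a b) (x u : ℝ) :
    (∫ t in x..u, iteratedDeriv r f t / (Nat.factorial (r-1) : ℝ) * (u - t) ^ (r-1))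
      = ∑ j ∈ Finset.range r, ((r-1).choose j : ℝ) * u ^ j *
          ∫ t in x..u, iteratedDeriv r f t / (Nat.factorial (r-1) : ℝ) * (-t) ^ (r-1-j) := by
  have hIj : ∀ (j : ℕ) (a b : ℝ), IntervalIntegrable
      (fun t => iteratedDeriv r f t / (Nat.factorial (r-1) : ℝ) * (-t) ^ (r-1-j)) volume a b := by
    intro j a b
    have hc : Continuous (fun t : ℝ => (-t) ^ (r-1-j)) := (continuous_neg).pow _
    exact ((hint a b).div_const _).mul_continuousOn hc.continuousOn
  have hexp : ∀ t : ℝ, iteratedDeriv r f t / (Nat.factorial (r-1) : ℝ) * (u - t) ^ (r-1)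
      = ∑ j ∈ Finset.range r, ((r-1).choose j : ℝ) * u ^ j *
          (iteratedDeriv r f t / (Nat.factorial (r-1) : ℝ) * (-t) ^ (r-1-j)) := by
    intro t
    have hb : (u - t) ^ (r-1) = (u + (-t)) ^ (r-1) := by ring_nf
    rw [hb, add_pow]
    rw [show r - 1 + 1 = r from by omega]
    rw [Finset.mul_sum]
    refine Finset.sum_congr rfl (fun j _ => ?_)
    push_cast
    ring
  rw [intervalIntegral.integral_congr (fun t _ => hexp t)]
  rw [intervalIntegral.integral_finset_sum (fun j _ => ((hIj j x u).const_mul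
    (((r-1).choose j : ℝ) * u ^ j)))]
  exact Finset.sum_congr rfl (fun j _ => intervalIntegral.integral_const_mul _ _)

lemma remainder_continuous {f : ℝ → ℝ} {r : ℕ} (hr : 1 ≤ r)
    (hint : ∀ a b : ℝ, IntervalIntegrable (iteratedDeriv r f) volume a b) (x : ℝ) :
    Continuous (fun u => ∫ t in x..u,
      iteratedDeriv r f t / (Nat.factorial (r-1) : ℝ) * (u - t) ^ (r-1)) := by
  have hIj : ∀ (j : ℕ) (a b : ℝ), IntervalIntegrable
      (fun t => iteratedDeriv r f t / (Nat.factorial (r-1) : ℝ) * (-t) ^ (r-1-j)) volume a b := by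
    intro j a b
    have hc : Continuous (fun t : ℝ => (-t) ^ (r-1-j)) := (continuous_neg).pow _
    exact ((hint a b).div_const _).mul_continuousOn hc.continuousOn
  have : (fun u => ∫ t in x..u,
      iteratedDeriv r f t / (Nat.factorial (r-1) : ℝ) * (u - t) ^ (r-1))
      = fun u => ∑ j ∈ Finset.range r, ((r-1).choose j : ℝ) * u ^ j *
          ∫ t in x..u, iteratedDeriv r f t / (Nat.factorial (r-1) : ℝ) * (-t) ^ (r-1-j) := by
    funext u; exact remainder_repr hr hint x u
  rw [this]
  refine continuous_finset_sum _ (fun j _ => ?_)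
  exact (continuous_const.mul (continuous_pow j)).mul
    (intervalIntegral.continuous_primitive (hIj j) x)

lemma remainder_bound {f : ℝ → ℝ} {r : ℕ} (hr : 1 ≤ r)
    (hint : ∀ a b : ℝ, IntervalIntegrable (iteratedDeriv r f) volume a b)
    {K : ℝ} (hK0 : 0 ≤ K)
    (hK : ∀ a b : ℝ, a ≤ b → (∫ t in Set.Icc a b, |iteratedDeriv r f t|) ≤ K * (1 + (b - a)))
    (x u : ℝ) :
    |∫ t in x..u, iteratedDeriv r f t / (Nat.factorial (r-1) : ℝ) * (u - t) ^ (r-1)|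
      ≤ K * (1 + |u - x|) ^ r := by
  set a := min x u with ha
  set b := max x u with hb
  have hab : a ≤ b := min_le_max
  have hba : b - a = |u - x| := by
    rw [ha, hb, max_sub_min_eq_abs, abs_sub_comm]
  set h : ℝ → ℝ := fun t => iteratedDeriv r f t / (Nat.factorial (r-1) : ℝ) * (u - t) ^ (r-1)
    with hh_def
  have hh : IntervalIntegrable h volume x u :=
    ((hint x u).div_const _).mul_continuousOn
      ((continuous_const.sub continuous_id).pow _).continuousOn
  have step1 : |∫ t in x..u, h t| ≤ ∫ t in Set.Ioc a b, |h t| := by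
    have := intervalIntegral.norm_integral_le_integral_norm_uIoc (f := h) (a := x) (b := u)
      (μ := volume)
    simpa [Real.norm_eq_abs, Set.uIoc, ha, hb] using this
  have step2 : (∫ t in Set.Ioc a b, |h t|) = ∫ t in Set.Icc a b, |h t| :=
    (MeasureTheory.integral_Icc_eq_integral_Ioc).symm
  have int1 : IntegrableOn (fun t => |h t|) (Set.Icc a b) volume := by
    rw [integrableOn_Icc_iff_integrableOn_Ioc]
    have := hh.norm
    rw [intervalIntegrable_iff] at this
    simpa [Real.norm_eq_abs, Set.uIoc, ha, hb] using this
  have int2 : IntegrableOn (fun t => |iteratedDeriv r f t| * (1 + |u - x|) ^ (r-1))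
      (Set.Icc a b) volume := by
    rw [integrableOn_Icc_iff_integrableOn_Ioc]
    have := (hint x u).norm
    rw [intervalIntegrable_iff] at this
    have h2 : IntegrableOn (fun t => ‖iteratedDeriv r f t‖) (Set.Ioc a b) volume := by
      simpa [Set.uIoc, ha, hb] using this
    simpa [Real.norm_eq_abs, IntegrableOn] using h2.mul_const ((1 + |u - x|) ^ (r-1))
  have step3 : (∫ t in Set.Icc a b, |h t|)
      ≤ ∫ t in Set.Icc a b, |iteratedDeriv r f t| * (1 + |u - x|) ^ (r-1) := by
    refine setIntegral_mono_on int1 int2 measurableSet_Icc (fun t ht => ?_)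
    have htu : |u - t| ≤ |u - x| := by
      have h1 : a ≤ t := ht.1
      have h2 : t ≤ b := ht.2
      have h3 : a ≤ u := min_le_right x u
      have h4 : u ≤ b := le_max_right x u
      rw [← hba]
      rw [abs_sub_le_iff]
      constructor <;> linarith
    have hpow : |u - t| ^ (r-1) ≤ (1 + |u - x|) ^ (r-1) := by
      apply pow_le_pow_left₀ (abs_nonneg _)
      have : 0 ≤ |u - x| := abs_nonneg _
      linarith
    have hfac : (1:ℝ) ≤ (Nat.factorial (r-1) : ℝ) := by
      exact_mod_cast Nat.one_le_iff_ne_zero.2 (Nat.factorial_ne_zero _)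
    calc |h t| = |iteratedDeriv r f t| / (Nat.factorial (r-1) : ℝ) * |u - t| ^ (r-1) := by
          rw [hh_def]
          rw [abs_mul, abs_div, abs_pow, Nat.abs_cast]
      _ ≤ |iteratedDeriv r f t| * |u - t| ^ (r-1) := by
          apply mul_le_mul_of_nonneg_right _ (pow_nonneg (abs_nonneg _) _)
          exact div_le_self (abs_nonneg _) hfac
      _ ≤ |iteratedDeriv r f t| * (1 + |u - x|) ^ (r-1) :=
          mul_le_mul_of_nonneg_left hpow (abs_nonneg _)
  have step4 : (∫ t in Set.Icc a b, |iteratedDeriv r f t| * (1 + |u - x|) ^ (r-1))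
      ≤ K * (1 + |u - x|) ^ r := by
    rw [MeasureTheory.integral_mul_const]
    have hKab := hK a b hab
    have hpowr : (1 + |u - x|) ^ r = (1 + |u - x|) ^ (r-1) * (1 + |u - x|) := by
      rw [← pow_succ]
      congr 1
      omega
    calc (∫ t in Set.Icc a b, |iteratedDeriv r f t|) * (1 + |u - x|) ^ (r-1)
        ≤ (K * (1 + |u - x|)) * (1 + |u - x|) ^ (r-1) := by
          apply mul_le_mul_of_nonneg_right _ (pow_nonneg (by positivity) _)
          calc (∫ t in Set.Icc a b, |iteratedDeriv r f t|) ≤ K * (1 + (b - a)) := hKab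
            _ = K * (1 + |u - x|) := by rw [hba]
      _ = K * (1 + |u - x|) ^ r := by rw [hpowr]; ring
  calc |∫ t in x..u, h t| ≤ ∫ t in Set.Ioc a b, |h t| := step1
    _ = ∫ t in Set.Icc a b, |h t| := step2
    _ ≤ ∫ t in Set.Icc a b, |iteratedDeriv r f t| * (1 + |u - x|) ^ (r-1) := step3
    _ ≤ K * (1 + |u - x|) ^ r := step4

lemma phi_summable {φ : ℝ → ℝ} {ν : ℕ} (h : discAbsMoment φ (ν : ℝ) < ⊤) (y : ℝ) :
    Summable (fun k : ℤ => |φ (y - k)| * |y - (k : ℝ)| ^ ν) := by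
  refine summable_of_tsum_ofReal ?_ (fun k => by positivity)
  have hle : (∑' k : ℤ, ENNReal.ofReal (|φ (y - k)| * |y - (k : ℝ)| ^ (ν : ℝ)))
      ≤ discAbsMoment φ (ν : ℝ) := le_iSup (fun u => ∑' k : ℤ,
        ENNReal.ofReal (|φ (u - k)| * |u - (k : ℝ)| ^ (ν : ℝ))) y
  have heq : ∀ k : ℤ, ENNReal.ofReal (|φ (y - k)| * |y - (k : ℝ)| ^ ν)
      = ENNReal.ofReal (|φ (y - k)| * |y - (k : ℝ)| ^ (ν : ℝ)) := by
    intro k; rw [Real.rpow_natCast]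
  rw [tsum_congr heq]
  exact ne_top_of_le_ne_top h.ne hle

lemma phi_summable' {φ : ℝ → ℝ} {ν : ℕ} (h : discAbsMoment φ (ν : ℝ) < ⊤) (y : ℝ) :
    Summable (fun k : ℤ => φ (y - k) * ((k : ℝ) - y) ^ ν) := by
  refine Summable.of_norm_bounded (phi_summable h y) (fun k => ?_)
  rw [Real.norm_eq_abs, abs_mul, abs_pow, abs_sub_comm ((k:ℝ)) y]


end Helpers

/-- Taylor expansion of the Durrmeyer sampling operators: under
assumptions (i) and (ii), all intermediate terms cancel and only the integral remainder
survives. -/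
theorem durr_taylor_expansion (r : ℕ) (hr : 1 < r) (φ ψ : ℝ → ℝ)
    (hφ : IsDiscreteKernel φ) (hψ : IsContinuousKernel ψ)
    (hi : AssumptionI φ r) (hii : AssumptionII φ ψ r)
    (hMφ : ∀ ν : ℕ, ν ≤ r → discAbsMoment φ (ν : ℝ) < ⊤)
    (hMψ : ∀ ν : ℕ, ν ≤ r → contAbsMoment ψ (ν : ℝ) < ⊤)
    (p : ℝ≥0∞) (hp : 1 ≤ p) (f : ℝ → ℝ)
    (hf : (p ≠ ⊤ ∧ MemSobolev r p f) ∨ (p = ⊤ ∧ MemCr r f))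
    (w : ℝ) (hw : 0 < w) (x : ℝ) :
    durr φ ψ w f x = f x + ∑' k : ℤ, φ (w * x - k) *
      (w * ∫ u : ℝ, ψ (w * u - k) *
        (∫ t in x..u, iteratedDeriv r f t / (Nat.factorial (r - 1) : ℝ) * (u - t) ^ (r - 1))) := by
  classical
  have hr1 : 1 ≤ r := hr.le
  have hwne : w ≠ 0 := ne_of_gt hw
  -- derivatives and integrability facts
  have hd : ∀ i < r, Differentiable ℝ (iteratedDeriv i f) := by
    rcases hf with ⟨_, _, h, _⟩ | ⟨_, h, _⟩ <;> exact h
  obtain ⟨q, hq1, hqmem⟩ : ∃ q : ℝ≥0∞, 1 ≤ q ∧ MemLp (iteratedDeriv r f) q volume := by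
    rcases hf with ⟨hne, _, _, hmr⟩ | ⟨hpt, _, hcr⟩
    · exact ⟨p, hp, hmr⟩
    · obtain ⟨hu, M, hM⟩ := hcr r le_rfl
      exact ⟨⊤, le_top, memLp_top_of_bound hu.continuous.aestronglyMeasurable M
        (Filter.Eventually.of_forall fun u => by
          simpa [Real.norm_eq_abs] using hM u)⟩
  have hint : ∀ a b : ℝ, IntervalIntegrable (iteratedDeriv r f) volume a b :=
    memLp_intervalIntegrable hq1 hqmem
  obtain ⟨K, hK0, hK⟩ := L1_interval_bound hq1 hqmem
  -- the Taylor remainder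
  set R : ℝ → ℝ := fun u =>
    ∫ t in x..u, iteratedDeriv r f t / (Nat.factorial (r - 1) : ℝ) * (u - t) ^ (r - 1) with hRdef
  have hRcont : Continuous R := remainder_continuous hr1 hint x
  have hRb : ∀ u, |R u| ≤ K * (1 + |u - x|) ^ r := fun u => remainder_bound hr1 hint hK0 hK x u
  have htay : ∀ u, f u = (∑ i ∈ Finset.range r,
      iteratedDeriv i f x / (Nat.factorial i : ℝ) * (u - x) ^ i) + R u := by
    intro u
    refine taylor_int hr1 hd (fun n hn1 hnr a b => ?_) x u
    rcases eq_or_lt_of_le hnr with hh | hh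
    · rw [hh]; exact hint a b
    · exact ((hd n hh).continuous).intervalIntegrable a b
  -- ψ facts
  have hψm : AEStronglyMeasurable ψ volume := hψ.integrable.aestronglyMeasurable
  have hIψ : ∀ ν ≤ r, Integrable (fun v : ℝ => |v| ^ ν * |ψ v|) := fun ν hν =>
    psi_moment_integrable hψm (hMψ ν hν)
  have hIψ' : ∀ ν ≤ r, Integrable (fun v : ℝ => v ^ ν * ψ v) := by
    intro ν hν
    refine (hIψ ν hν).mono' ((continuous_pow ν).aestronglyMeasurable.mul hψm) ?_
    filter_upwards with v
    rw [Real.norm_eq_abs, abs_mul, abs_pow]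
  set c : ℝ := w * x with hc
  set g : ℕ → ℝ := fun i => iteratedDeriv i f x / (Nat.factorial i : ℝ) with hg
  -- per-k computation of the polynomial moments
  have hJ : ∀ (k : ℤ) (i : ℕ), i ≤ r →
      Integrable (fun u : ℝ => ψ (w * u - k) * (u - x) ^ i) ∧
      w * ∫ u : ℝ, ψ (w * u - k) * (u - x) ^ i
        = (w⁻¹) ^ i * ∑ ν ∈ Finset.range (i + 1),
            (i.choose ν : ℝ) * ((k : ℝ) - c) ^ (i - ν) * contMoment ψ ν := by
    intro k i hi
    set d : ℝ := (k : ℝ) - c with hd'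
    set G : ℝ → ℝ := fun v => ψ v * ((v + (k : ℝ)) / w - x) ^ i with hG
    have hGfun : (fun u : ℝ => ψ (w * u - k) * (u - x) ^ i) = fun u => G (w * u - k) := by
      funext u
      rw [hG]
      congr 2
      field_simp
      ring
    have hGexp : G = fun v => ∑ ν ∈ Finset.range (i + 1),
        ((w⁻¹) ^ i * (i.choose ν : ℝ) * d ^ (i - ν)) * (v ^ ν * ψ v) := by
      funext v
      have h1 : (v + (k : ℝ)) / w - x = w⁻¹ * (v + d) := by
        rw [hd', hc]
        field_simp
        ring
      have h2 : G v = ψ v * ((v + (k : ℝ)) / w - x) ^ i := rfl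
      rw [h2, h1, mul_pow, add_pow, Finset.mul_sum, Finset.mul_sum]
      refine Finset.sum_congr rfl (fun ν hν => ?_)
      ring
    have hmem : ∀ ν ∈ Finset.range (i + 1), ν ≤ r := by
      intro ν hν
      have := Finset.mem_range.1 hν
      omega
    have hGint : Integrable G := by
      rw [hGexp]
      exact integrable_finset_sum _ (fun ν hν => (hIψ' ν (hmem ν hν)).const_mul _)
    have hGval : (∫ v : ℝ, G v) = (w⁻¹) ^ i * ∑ ν ∈ Finset.range (i + 1),
        (i.choose ν : ℝ) * ((k : ℝ) - c) ^ (i - ν) * contMoment ψ ν := by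
      rw [hGexp, integral_finset_sum _ (fun ν hν => (hIψ' ν (hmem ν hν)).const_mul _),
        Finset.mul_sum]
      refine Finset.sum_congr rfl (fun ν hν => ?_)
      rw [MeasureTheory.integral_const_mul]
      simp only [contMoment, ← hd']
      ring
    constructor
    · rw [hGfun]
      exact integrable_comp_affine hGint hwne _
    · rw [hGfun, integral_comp_affine G hw _, ← mul_assoc, mul_inv_cancel₀ hwne, one_mul, hGval]
  -- the remainder integrals: integrability and bounds
  obtain ⟨CR, hCR0, hIR, hbR⟩ : ∃ CR : ℝ, 0 ≤ CR ∧
      (∀ k : ℤ, Integrable (fun u : ℝ => ψ (w * u - k) * R u)) ∧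
      (∀ k : ℤ, |w * ∫ u : ℝ, ψ (w * u - k) * R u| ≤ CR * (1 + |(k : ℝ) - c|) ^ r) := by
    set base : ℝ → ℝ := fun v => |ψ v| * (1 + |v|) ^ r with hbase_def
    have hbase : Integrable base := by
      have hbe : base = fun v => ∑ ν ∈ Finset.range (r + 1),
          (r.choose ν : ℝ) * (|v| ^ (r - ν) * |ψ v|) := by
        funext v
        show |ψ v| * (1 + |v|) ^ r = _
        have : (1 + |v|) ^ r = ∑ ν ∈ Finset.range (r + 1),
            (1:ℝ) ^ ν * |v| ^ (r - ν) * (r.choose ν : ℝ) := add_pow 1 |v| r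
        rw [this, Finset.mul_sum]
        exact Finset.sum_congr rfl (fun ν hν => by ring)
      rw [hbe]
      exact integrable_finset_sum _ (fun ν hν => (hIψ (r - ν) (by omega)).const_mul _)
    set Ibase : ℝ := ∫ v : ℝ, base v with hIbase_def
    have hIbase0 : 0 ≤ Ibase := integral_nonneg (fun v => by positivity)
    set A : ℝ := (1 + w⁻¹) ^ r with hA_def
    have hA0 : 0 ≤ A := by positivity
    have hwinv : 0 < w⁻¹ := inv_pos.2 hw
    refine ⟨K * A * Ibase, by positivity, ?_⟩
    have haux : ∀ k : ℤ, Integrable (fun u : ℝ => ψ (w * u - k) * R u) ∧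
        |w * ∫ u : ℝ, ψ (w * u - k) * R u| ≤ (K * A * Ibase) * (1 + |(k : ℝ) - c|) ^ r := by
      intro k
      set d : ℝ := (k : ℝ) - c with hd'
      set base2 : ℝ → ℝ := fun v => |ψ v| * (1 + |(v + (k : ℝ)) / w - x|) ^ r with hb2_def
      have hb2meas : AEStronglyMeasurable base2 volume := by
        have hcont : Continuous (fun v : ℝ => (1 + |(v + (k : ℝ)) / w - x|) ^ r) :=
          (continuous_const.add ((((continuous_id.add continuous_const).div_const w).sub
            continuous_const).abs)).pow r
        have hh := hψm.norm.mul hcont.aestronglyMeasurable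
        refine hh.congr ?_
        filter_upwards with v
        simp [hb2_def, Real.norm_eq_abs]
      have hb2le : ∀ v : ℝ, base2 v ≤ (A * (1 + |d|) ^ r) * base v := by
        intro v
        have hvd : (v + (k : ℝ)) / w - x = (v + d) / w := by
          rw [hd', hc]
          field_simp
          ring
        have h1 : |(v + d) / w| ≤ (|v| + |d|) * w⁻¹ := by
          rw [div_eq_mul_inv, abs_mul, abs_of_pos hwinv]
          exact mul_le_mul_of_nonneg_right (abs_add_le v d) hwinv.le
        have h2 : 1 + |(v + d) / w| ≤ (1 + w⁻¹) * ((1 + |v|) * (1 + |d|)) := by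
          have hv0 : 0 ≤ |v| := abs_nonneg v
          have hd0 : 0 ≤ |d| := abs_nonneg d
          have hexp : (1 + w⁻¹) * ((1 + |v|) * (1 + |d|))
              = 1 + |v| + |d| + |v| * |d| + w⁻¹ + |v| * w⁻¹ + |d| * w⁻¹
                + |v| * |d| * w⁻¹ := by ring
          have h1' : (|v| + |d|) * w⁻¹ = |v| * w⁻¹ + |d| * w⁻¹ := by ring
          rw [hexp]
          have hnn : 0 ≤ |v| * |d| * w⁻¹ := by positivity
          have hnn2 : 0 ≤ |v| * |d| := by positivity
          linarith [h1, hwinv.le]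
        have h3 : (1 + |(v + d) / w|) ^ r ≤ ((1 + w⁻¹) * ((1 + |v|) * (1 + |d|))) ^ r :=
          pow_le_pow_left₀ (by positivity) h2 r
        have h4 : base2 v = |ψ v| * (1 + |(v + d) / w|) ^ r := by
          simp only [hb2_def]
          rw [hvd]
        rw [h4]
        calc |ψ v| * (1 + |(v + d) / w|) ^ r
            ≤ |ψ v| * ((1 + w⁻¹) * ((1 + |v|) * (1 + |d|))) ^ r :=
              mul_le_mul_of_nonneg_left h3 (abs_nonneg _)
          _ = (A * (1 + |d|) ^ r) * base v := by
              rw [hA_def, hbase_def, mul_pow, mul_pow]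
              ring
      have hb2int : Integrable base2 := by
        refine ((hbase.const_mul (A * (1 + |d|) ^ r)).mono' hb2meas ?_)
        filter_upwards with v
        rw [Real.norm_of_nonneg (by positivity)]
        exact hb2le v
      have hcomp : Integrable (fun u : ℝ => base2 (w * u - k)) :=
        integrable_comp_affine hb2int hwne _
      have hb2eq : ∀ u : ℝ, base2 (w * u - k) = |ψ (w * u - k)| * (1 + |u - x|) ^ r := by
        intro u
        have : ((w * u - (k:ℝ)) + (k:ℝ)) / w - x = u - x := by field_simp; ring
        simp only [hb2_def]
        rw [this]
      have hptw : ∀ u : ℝ, ‖ψ (w * u - k) * R u‖ ≤ K * base2 (w * u - k) := by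
        intro u
        rw [Real.norm_eq_abs, abs_mul, hb2eq u]
        calc |ψ (w * u - k)| * |R u| ≤ |ψ (w * u - k)| * (K * (1 + |u - x|) ^ r) :=
              mul_le_mul_of_nonneg_left (hRb u) (abs_nonneg _)
          _ = K * (|ψ (w * u - k)| * (1 + |u - x|) ^ r) := by ring
      have hIRk : Integrable (fun u : ℝ => ψ (w * u - k) * R u) := by
        refine ((hcomp.const_mul K).mono' ?_ (Filter.Eventually.of_forall hptw))
        exact (integrable_comp_affine hψ.integrable hwne (k:ℝ)).aestronglyMeasurable.mul
          hRcont.aestronglyMeasurable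
      refine ⟨hIRk, ?_⟩
      have hb1 : |∫ u : ℝ, ψ (w * u - k) * R u| ≤ ∫ u : ℝ, K * base2 (w * u - k) := by
        calc |∫ u : ℝ, ψ (w * u - k) * R u| ≤ ∫ u : ℝ, ‖ψ (w * u - k) * R u‖ := by
              rw [← Real.norm_eq_abs]
              exact norm_integral_le_integral_norm _
          _ ≤ ∫ u : ℝ, K * base2 (w * u - k) :=
              integral_mono hIRk.norm (hcomp.const_mul K) hptw
      have hb2 : (∫ u : ℝ, K * base2 (w * u - k)) = K * (w⁻¹ * ∫ v : ℝ, base2 v) := by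
        rw [MeasureTheory.integral_const_mul, integral_comp_affine base2 hw _]
      have hb3 : (∫ v : ℝ, base2 v) ≤ (A * (1 + |d|) ^ r) * Ibase := by
        rw [hIbase_def, ← MeasureTheory.integral_const_mul]
        exact integral_mono hb2int (hbase.const_mul _) hb2le
      rw [abs_mul, abs_of_pos hw]
      calc w * |∫ u : ℝ, ψ (w * u - k) * R u|
          ≤ w * (K * (w⁻¹ * ∫ v : ℝ, base2 v)) := by
            refine mul_le_mul_of_nonneg_left ?_ hw.le
            rw [← hb2]
            exact hb1
        _ ≤ w * (K * (w⁻¹ * ((A * (1 + |d|) ^ r) * Ibase))) := by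
            have h5 := mul_le_mul_of_nonneg_left hb3 hwinv.le
            have h6 := mul_le_mul_of_nonneg_left h5 hK0
            exact mul_le_mul_of_nonneg_left h6 hw.le
        _ = (K * A * Ibase) * (1 + |d|) ^ r := by
            field_simp
    exact ⟨fun k => (haux k).1, fun k => (haux k).2⟩
  -- φ summability
  have hφS : ∀ j ≤ r, Summable (fun k : ℤ => |φ (c - k)| * |c - (k : ℝ)| ^ j) := fun j hj =>
    phi_summable (hMφ j hj) c
  have hφS' : ∀ j ≤ r, Summable (fun k : ℤ => φ (c - k) * ((k : ℝ) - c) ^ j) := fun j hj =>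
    phi_summable' (hMφ j hj) c
  have hmom0 : ∀ y : ℝ, discMoment φ 0 y = 1 := by
    intro y
    have := (hφ.partition y).tsum_eq
    rw [discMoment]
    simpa using this
  -- summability of remainder terms
  have hremS : Summable (fun k : ℤ => φ (c - k) * (w * ∫ u : ℝ, ψ (w * u - k) * R u)) := by
    have hS : Summable (fun k : ℤ => CR * (|φ (c - k)| * (1 + |(k:ℝ) - c|) ^ r)) := by
      apply Summable.mul_left
      have hexp : ∀ k : ℤ, |φ (c - k)| * (1 + |(k:ℝ) - c|) ^ r
          = ∑ j ∈ Finset.range (r + 1),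
              (r.choose j : ℝ) * (|φ (c - k)| * |c - (k:ℝ)| ^ (r - j)) := by
        intro k
        have h1 : (1 + |(k:ℝ) - c|) ^ r = ∑ j ∈ Finset.range (r+1),
            (1:ℝ)^j * |(k:ℝ) - c| ^ (r - j) * (r.choose j : ℝ) := add_pow 1 _ r
        rw [h1, Finset.mul_sum]
        refine Finset.sum_congr rfl fun j hj => ?_
        rw [abs_sub_comm ((k:ℝ)) c]
        ring
      refine Summable.congr ?_ (fun k => (hexp k).symm)
      exact summable_sum (fun j hj => ((hφS (r - j) (by omega)).mul_left _))
    refine Summable.of_norm_bounded hS (fun k => ?_)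
    rw [Real.norm_eq_abs, abs_mul]
    calc |φ (c - k)| * |w * ∫ u : ℝ, ψ (w * u - k) * R u|
        ≤ |φ (c - k)| * (CR * (1 + |(k:ℝ) - c|) ^ r) :=
          mul_le_mul_of_nonneg_left (hbR k) (abs_nonneg _)
      _ = CR * (|φ (c - k)| * (1 + |(k:ℝ) - c|) ^ r) := by ring
  -- per-k splitting
  have hkey : ∀ k : ℤ, φ (c - k) * (w * ∫ u : ℝ, ψ (w * u - k) * f u)
      = (∑ i ∈ Finset.range r, ∑ ν ∈ Finset.range (i + 1),
          (g i * (w⁻¹) ^ i * (i.choose ν : ℝ) * contMoment ψ ν)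
            * (φ (c - k) * ((k : ℝ) - c) ^ (i - ν)))
        + φ (c - k) * (w * ∫ u : ℝ, ψ (w * u - k) * R u) := by
    intro k
    have hJi : ∀ i ∈ Finset.range r, Integrable (fun u : ℝ => ψ (w * u - k) * (u - x) ^ i) :=
      fun i hi2 => (hJ k i (Finset.mem_range.1 hi2).le).1
    have hsplit : (∫ u : ℝ, ψ (w * u - k) * f u)
        = (∑ i ∈ Finset.range r, g i * ∫ u : ℝ, ψ (w * u - k) * (u - x) ^ i)
          + ∫ u : ℝ, ψ (w * u - k) * R u := by
      have h0 : (∫ u : ℝ, ψ (w * u - k) * f u)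
          = ∫ u : ℝ, ((∑ i ∈ Finset.range r, g i * (ψ (w * u - k) * (u - x) ^ i))
              + ψ (w * u - k) * R u) := by
        refine integral_congr_ae (Filter.Eventually.of_forall (fun u => ?_))
        beta_reduce
        rw [htay u, mul_add, Finset.mul_sum]
        congr 1
        exact Finset.sum_congr rfl fun i _ => by ring
      rw [h0, integral_add (integrable_finset_sum _
          (fun i hi2 => ((hJi i hi2).const_mul (g i)))) (hIR k),
        integral_finset_sum _ (fun i hi2 => ((hJi i hi2).const_mul (g i)))]
      congr 1
      exact Finset.sum_congr rfl fun i hi2 => MeasureTheory.integral_const_mul _ _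
    rw [hsplit, mul_add, mul_add]
    congr 1
    rw [Finset.mul_sum, Finset.mul_sum]
    refine Finset.sum_congr rfl fun i hi2 => ?_
    have hival := (hJ k i (Finset.mem_range.1 hi2).le).2
    have h2 : φ (c - k) * (w * (g i * ∫ u : ℝ, ψ (w * u - k) * (u - x) ^ i))
        = (g i * (w * ∫ u : ℝ, ψ (w * u - k) * (u - x) ^ i)) * φ (c - k) := by ring
    rw [h2, hival, Finset.mul_sum, Finset.mul_sum, Finset.sum_mul]
    exact Finset.sum_congr rfl fun ν hν => by ring
  -- summability of the main double sums
  have hmainS : ∀ i ∈ Finset.range r, ∀ ν ∈ Finset.range (i + 1), Summable (fun k : ℤ =>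
      (g i * (w⁻¹) ^ i * (i.choose ν : ℝ) * contMoment ψ ν)
        * (φ (c - k) * ((k : ℝ) - c) ^ (i - ν))) := by
    intro i hi ν hν
    exact ((hφS' (i - ν) (by simp at hi hν; omega)).mul_left _)
  have hmainS2 : ∀ i ∈ Finset.range r, Summable (fun k : ℤ => ∑ ν ∈ Finset.range (i + 1),
      (g i * (w⁻¹) ^ i * (i.choose ν : ℝ) * contMoment ψ ν)
        * (φ (c - k) * ((k : ℝ) - c) ^ (i - ν))) := fun i hi =>
    summable_sum fun ν hν => hmainS i hi ν hν
  have hmainS3 : Summable (fun k : ℤ => ∑ i ∈ Finset.range r, ∑ ν ∈ Finset.range (i + 1),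
      (g i * (w⁻¹) ^ i * (i.choose ν : ℝ) * contMoment ψ ν)
        * (φ (c - k) * ((k : ℝ) - c) ^ (i - ν))) :=
    summable_sum fun i hi => hmainS2 i hi
  -- the value of the main double sum
  have hmain_val : (∑ i ∈ Finset.range r, ∑ ν ∈ Finset.range (i + 1),
      (g i * (w⁻¹) ^ i * (i.choose ν : ℝ) * contMoment ψ ν) * discMoment φ (i - ν) c) = f x := by
    have hdm : ∀ m, m ≤ r → discMoment φ m c = discMoment φ m 0 := by
      intro m hm
      rcases Nat.eq_zero_or_pos m with h0 | h0
      · rw [h0, hmom0 c, hmom0 0]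
      · exact hi m h0 hm c 0
    have hc0 : contMoment ψ 0 = 1 := by
      simp only [contMoment, pow_zero, one_mul]
      exact hψ.integral_one
    rw [Finset.sum_eq_single_of_mem 0 (Finset.mem_range.2 (by omega)) ?side]
    case side =>
      intro i hi2 hne
      have hi' : i ≤ r - 1 := by have := Finset.mem_range.1 hi2; omega
      have h1 : 1 ≤ i := by omega
      have heach : ∀ ν ∈ Finset.range (i+1),
          (g i * (w⁻¹) ^ i * (i.choose ν : ℝ) * contMoment ψ ν) * discMoment φ (i - ν) c
          = (g i * (w⁻¹) ^ i) * ((i.choose ν : ℝ) * discMoment φ (i - ν) 0 * contMoment ψ ν) := by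
        intro ν hν
        rw [hdm (i - ν) (by omega)]
        ring
      rw [Finset.sum_congr rfl heach, ← Finset.mul_sum, hii i h1 hi', mul_zero]
    · rw [Finset.sum_range_one]
      have : (0:ℕ) - 0 = 0 := rfl
      rw [this, hmom0 c, hc0]
      simp [hg, iteratedDeriv_zero]
  -- assemble
  have hdurr : durr φ ψ w f x
      = ∑' k : ℤ, φ (c - k) * (w * ∫ u : ℝ, ψ (w * u - k) * f u) := rfl
  rw [hdurr, tsum_congr hkey, Summable.tsum_add hmainS3 hremS]
  congr 1
  rw [Summable.tsum_finsetSum (fun i hi => hmainS2 i hi)]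
  rw [← hmain_val]
  refine Finset.sum_congr rfl (fun i hi => ?_)
  rw [Summable.tsum_finsetSum (fun ν hν => hmainS i hi ν hν)]
  refine Finset.sum_congr rfl (fun ν hν => ?_)
  rw [Summable.tsum_mul_left _ (hφS' (i - ν) (by simp at hi hν; omega))]
  rfl
end

section
/- Let r > 1 be an integer, and let φ be a discrete kernel and ψ a continuous kernel satisfying assumptions (i) and (ii) and both satisfying condition (Θ) with θ > r + 1. Then for every g ∈ C^r(ℝ), every w > 0 and every x ∈ ℝ one has |(D_w^{φ,ψ} g)(x) − g(x)| ≤ (‖g^{(r)}‖_∞ / (w^r · r!)) · Σ_{ν=0}^{r} binom(r,ν) M_{r−ν}(φ) M̃_ν(ψ), and the constant Σ_{ν=0}^{r} binom(r,ν) M_{r−ν}(φ) M̃_ν(ψ) is finite. -/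
open MeasureTheory Filter Set
open scoped ENNReal BigOperators

section AuxLemmas

/-- Combined decay bound from boundedness and condition (Θ). -/
lemma durrAux_decay {φ : ℝ → ℝ} {θ : ℝ} (hθ : 0 < θ)
    (hb : ∃ M : ℝ, ∀ x : ℝ, |φ x| ≤ M) (hd : CondTheta φ θ) :
    ∃ K : ℝ, 0 ≤ K ∧ ∀ t : ℝ, |φ t| ≤ K * (1 + |t|) ^ (-θ) := by
  obtain ⟨M, hM⟩ := hb
  obtain ⟨C, R, hR, hC⟩ := hd
  have hM0 : 0 ≤ M := le_trans (abs_nonneg _) (hM 0)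
  set R' : ℝ := max R 1 with hR'def
  have hR1 : (1 : ℝ) ≤ R' := le_max_right _ _
  refine ⟨max (M * (1 + R') ^ θ) (|C| * 2 ^ θ), le_trans (by positivity) (le_max_left _ _),
    fun t => ?_⟩
  have hb0 : (0:ℝ) < 1 + |t| := by positivity
  rcases le_or_gt |t| R' with h | h
  · have h1 : (1 + |t|) ^ θ ≤ (1 + R') ^ θ :=
      Real.rpow_le_rpow (by positivity) (by linarith) hθ.le
    have h2 : (1:ℝ) ≤ (1 + R') ^ θ * (1 + |t|) ^ (-θ) := by
      rw [Real.rpow_neg hb0.le, ← div_eq_mul_inv, le_div_iff₀ (by positivity)]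
      simpa using h1
    calc |φ t| ≤ M := hM t
      _ ≤ M * ((1 + R') ^ θ * (1 + |t|) ^ (-θ)) := by nlinarith [h2, hM0]
      _ = (M * (1 + R') ^ θ) * (1 + |t|) ^ (-θ) := by ring
      _ ≤ max (M * (1 + R') ^ θ) (|C| * 2 ^ θ) * (1 + |t|) ^ (-θ) :=
          mul_le_mul_of_nonneg_right (le_max_left _ _) (by positivity)
  · have ht1 : (1:ℝ) ≤ |t| := le_trans hR1 h.le
    have ht0 : (0:ℝ) < |t| := by linarith
    have hRt : R ≤ |t| := le_trans (le_max_left R 1) h.le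
    have h1 : |φ t| ≤ |C| * |t| ^ (-θ) := by
      refine le_trans (hC t hRt) ?_
      exact mul_le_mul_of_nonneg_right (le_abs_self C) (by positivity)
    have hle : 1 + |t| ≤ 2 * |t| := by linarith
    have h2 : |t| ^ (-θ) ≤ 2 ^ θ * (1 + |t|) ^ (-θ) := by
      have ha : (0:ℝ) < |t| ^ θ := Real.rpow_pos_of_pos ht0 θ
      have hbp : (0:ℝ) < (1 + |t|) ^ θ := Real.rpow_pos_of_pos hb0 θ
      have hab : (1 + |t|) ^ θ ≤ 2 ^ θ * |t| ^ θ := by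
        rw [← Real.mul_rpow (by norm_num) ht0.le]
        exact Real.rpow_le_rpow (by positivity) hle hθ.le
      have key := mul_le_mul_of_nonneg_right hab
        (show (0:ℝ) ≤ (|t| ^ θ)⁻¹ * ((1 + |t|) ^ θ)⁻¹ by positivity)
      rw [Real.rpow_neg ht0.le, Real.rpow_neg hb0.le]
      calc (|t| ^ θ)⁻¹ = (1 + |t|) ^ θ * ((|t| ^ θ)⁻¹ * ((1 + |t|) ^ θ)⁻¹) := by
            field_simp
        _ ≤ 2 ^ θ * |t| ^ θ * ((|t| ^ θ)⁻¹ * ((1 + |t|) ^ θ)⁻¹) := key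
        _ = 2 ^ θ * ((1 + |t|) ^ θ)⁻¹ := by field_simp
    calc |φ t| ≤ |C| * |t| ^ (-θ) := h1
      _ ≤ |C| * (2 ^ θ * (1 + |t|) ^ (-θ)) := mul_le_mul_of_nonneg_left h2 (abs_nonneg C)
      _ = (|C| * 2 ^ θ) * (1 + |t|) ^ (-θ) := by ring
      _ ≤ max (M * (1 + R') ^ θ) (|C| * 2 ^ θ) * (1 + |t|) ^ (-θ) :=
          mul_le_mul_of_nonneg_right (le_max_right _ _) (by positivity)

/-- Summability of the shifted p-series over ℤ. -/
lemma durrAux_summable_int {s : ℝ} (hs : 1 < s) :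
    Summable (fun j : ℤ => (1 + |(j:ℝ)|) ^ (-s)) := by
  have key : Summable (fun n : ℕ => (1 + (n:ℝ)) ^ (-s)) := by
    have h0 : Summable (fun n : ℕ => ((n:ℝ)) ^ (-s)) :=
      Real.summable_nat_rpow.mpr (by linarith)
    have h1 := (summable_nat_add_iff 1).mpr h0
    refine h1.congr fun n => ?_
    push_cast
    ring_nf
  apply Summable.of_nat_of_neg
  · refine key.congr fun n => ?_
    norm_num
  · refine key.congr fun n => ?_
    push_cast
    rw [abs_neg, abs_of_nonneg (Nat.cast_nonneg n)]

end AuxLemmas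
section AuxLemmas2

/-- Uniform bound for discrete sums `∑_k |φ(u-k)| |u-k|^j`. -/
lemma durrAux_phi_sum {φ : ℝ → ℝ} {θ : ℝ} {K : ℝ} (hK : 0 ≤ K)
    (hφK : ∀ t : ℝ, |φ t| ≤ K * (1 + |t|) ^ (-θ)) {j : ℕ} (hj : (j:ℝ) + 1 < θ) :
    ∃ B : ℝ, 0 ≤ B ∧ ∀ u : ℝ, Summable (fun k : ℤ => |φ (u - k)| * |u - k| ^ j) ∧
      (∑' k : ℤ, |φ (u - k)| * |u - k| ^ j) ≤ B := by
  set s : ℝ := θ - j with hsdef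
  have hs : 1 < s := by simp only [hsdef]; linarith
  have hs0 : (0:ℝ) < s := by linarith
  have hsum := durrAux_summable_int hs
  set S : ℝ := ∑' j : ℤ, (1 + |(j:ℝ)|) ^ (-s) with hSdef
  have hS : 0 ≤ S := tsum_nonneg fun _ => Real.rpow_nonneg (by positivity) _
  refine ⟨K * 2 ^ s * S, by positivity, fun u => ?_⟩
  set k₀ : ℤ := ⌊u⌋ with hk₀
  have hfl : |u - (k₀:ℝ)| ≤ 1 := by
    rw [abs_of_nonneg (by linarith [Int.floor_le u])]
    linarith [Int.lt_floor_add_one u]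
  have hpt : ∀ k : ℤ, |φ (u - k)| * |u - k| ^ j ≤
      (K * 2 ^ s) * (1 + |((k - k₀ : ℤ):ℝ)|) ^ (-s) := by
    intro k
    have hb0 : (0:ℝ) < 1 + |u - k| := by positivity
    have h1 : |φ (u - k)| ≤ K * (1 + |u - k|) ^ (-θ) := hφK _
    have h2 : |u - k| ^ j ≤ (1 + |u - k|) ^ (j:ℝ) := by
      rw [Real.rpow_natCast]
      exact pow_le_pow_left₀ (abs_nonneg _) (by linarith) j
    have h3 : |φ (u - k)| * |u - k| ^ j ≤ K * (1 + |u - k|) ^ (-s) := by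
      calc |φ (u - k)| * |u - k| ^ j
          ≤ (K * (1 + |u - k|) ^ (-θ)) * (1 + |u - k|) ^ (j:ℝ) :=
            mul_le_mul h1 h2 (by positivity) (by positivity)
        _ = K * ((1 + |u - k|) ^ (-θ) * (1 + |u - k|) ^ (j:ℝ)) := by ring
        _ = K * (1 + |u - k|) ^ (-θ + (j:ℝ)) := by rw [← Real.rpow_add hb0]
        _ = K * (1 + |u - k|) ^ (-s) := by rw [hsdef]; ring_nf
    refine h3.trans ?_
    have hshift : 1 + |((k - k₀ : ℤ):ℝ)| ≤ 2 * (1 + |u - k|) := by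
      push_cast
      have : |(k:ℝ) - k₀| ≤ |u - k| + |u - k₀| := by
        rw [abs_sub_comm u k]
        calc |(k:ℝ) - k₀| = |(k - u) + (u - k₀)| := by ring_nf
          _ ≤ |(k:ℝ) - u| + |u - k₀| := abs_add_le _ _
      linarith [hfl, abs_nonneg (u - (k:ℝ))]
    have hpos : (0:ℝ) < 1 + |((k - k₀ : ℤ):ℝ)| := by positivity
    have h4 : (2 * (1 + |u - k|)) ^ (-s) ≤ (1 + |((k - k₀ : ℤ):ℝ)|) ^ (-s) :=
      Real.rpow_le_rpow_of_nonpos hpos hshift (by linarith)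
    have h5 : (2 * (1 + |u - k|)) ^ (-s) = 2 ^ (-s) * (1 + |u - k|) ^ (-s) :=
      Real.mul_rpow (by norm_num) hb0.le
    have h6 : (1 + |u - k|) ^ (-s) ≤ 2 ^ s * (1 + |((k - k₀ : ℤ):ℝ)|) ^ (-s) := by
      have h7 := mul_le_mul_of_nonneg_left (h5 ▸ h4) (show (0:ℝ) ≤ 2 ^ s by positivity)
      calc (1 + |u - k|) ^ (-s) = 2 ^ s * (2 ^ (-s) * (1 + |u - k|) ^ (-s)) := by
            rw [← mul_assoc, ← Real.rpow_add (by norm_num : (0:ℝ) < 2)]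
            norm_num
        _ ≤ 2 ^ s * (1 + |((k - k₀ : ℤ):ℝ)|) ^ (-s) := h7
    calc K * (1 + |u - k|) ^ (-s)
        ≤ K * (2 ^ s * (1 + |((k - k₀ : ℤ):ℝ)|) ^ (-s)) := mul_le_mul_of_nonneg_left h6 hK
      _ = (K * 2 ^ s) * (1 + |((k - k₀ : ℤ):ℝ)|) ^ (-s) := by ring
  have hsum2 : Summable (fun k : ℤ => (1 + |((k - k₀ : ℤ):ℝ)|) ^ (-s)) := by
    have := (Equiv.subRight k₀).summable_iff
      (f := fun j : ℤ => (1 + |(j:ℝ)|) ^ (-s))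
    exact this.mpr hsum
  have hsum3 : Summable (fun k : ℤ => (K * 2 ^ s) * (1 + |((k - k₀ : ℤ):ℝ)|) ^ (-s)) :=
    hsum2.mul_left _
  have hsummain : Summable (fun k : ℤ => |φ (u - k)| * |u - k| ^ j) :=
    Summable.of_nonneg_of_le (fun k => by positivity) hpt hsum3
  refine ⟨hsummain, ?_⟩
  calc (∑' k : ℤ, |φ (u - k)| * |u - k| ^ j)
      ≤ ∑' k : ℤ, (K * 2 ^ s) * (1 + |((k - k₀ : ℤ):ℝ)|) ^ (-s) :=
        Summable.tsum_le_tsum hpt hsummain hsum3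
    _ = (K * 2 ^ s) * ∑' k : ℤ, (1 + |((k - k₀ : ℤ):ℝ)|) ^ (-s) := tsum_mul_left
    _ = (K * 2 ^ s) * S := by
        rw [hSdef, ← (Equiv.subRight k₀).tsum_eq (f := fun j : ℤ => (1 + |(j:ℝ)|) ^ (-s))]
        rfl
    _ = K * 2 ^ s * S := by ring

end AuxLemmas2
section AuxLemmas3

/-- Integrability of absolute moments of the continuous kernel. -/
lemma durrAux_psi_moment {ψ : ℝ → ℝ} (hψ : IsContinuousKernel ψ) {θ : ℝ}
    (hd : CondTheta ψ θ) {j : ℕ} (hj : (j:ℝ) + 1 < θ) :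
    Integrable (fun t : ℝ => |t| ^ j * |ψ t|) := by
  obtain ⟨C, R, hR, hC⟩ := hd
  have hmeas : AEStronglyMeasurable (fun t : ℝ => |t| ^ j * |ψ t|) volume := by
    have h1 : AEStronglyMeasurable (fun t : ℝ => |t| ^ j) volume :=
      ((continuous_abs.pow j)).aestronglyMeasurable
    have h2 : AEStronglyMeasurable (fun t : ℝ => |ψ t|) volume := by
      have := hψ.integrable.aestronglyMeasurable.norm
      simpa [Real.norm_eq_abs] using this
    exact h1.mul h2
  have hs' : (j:ℝ) - θ < -1 := by linarith
  -- tail integrability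
  have htail : IntegrableOn (fun t : ℝ => t ^ ((j:ℝ) - θ)) (Set.Ioi R) volume :=
    integrableOn_Ioi_rpow_of_lt hs' hR
  have htailneg : IntegrableOn (fun t : ℝ => (-t) ^ ((j:ℝ) - θ)) (Set.Iio (-R)) volume := by
    have h1 := htail.integrable_indicator measurableSet_Ioi
    have h2 := h1.comp_neg
    have h3 : (fun t : ℝ => Set.indicator (Set.Ioi R) (fun y : ℝ => y ^ ((j:ℝ) - θ)) (-t)) =
        Set.indicator (Set.Iio (-R)) (fun t : ℝ => (-t) ^ ((j:ℝ) - θ)) := by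
      funext t
      by_cases ht : t < -R
      · rw [Set.indicator_of_mem (show -t ∈ Set.Ioi R by simp; linarith),
          Set.indicator_of_mem (by simpa using ht)]
      · rw [Set.indicator_of_notMem (show -t ∉ Set.Ioi R by simp; linarith [not_lt.mp ht]),
          Set.indicator_of_notMem (by simpa using ht)]
    rw [h3] at h2
    exact (integrable_indicator_iff measurableSet_Iio).mp h2
  -- split the domain
  have hsplit : (Set.univ : Set ℝ) = Set.Icc (-R) R ∪ (Set.Iio (-R) ∪ Set.Ioi R) := by
    ext t
    simp only [Set.mem_univ, Set.mem_union, Set.mem_Icc, Set.mem_Iio, Set.mem_Ioi, true_iff]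
    by_cases h1 : t < -R
    · tauto
    · by_cases h2 : R < t
      · tauto
      · left; constructor <;> linarith
  rw [← integrableOn_univ, hsplit]
  have hmid : IntegrableOn (fun t : ℝ => |t| ^ j * |ψ t|) (Set.Icc (-R) R) volume := by
    refine Integrable.mono' ((hψ.integrable.norm.const_mul (R ^ j)).integrableOn)
      hmeas.restrict ?_
    rw [ae_restrict_iff' measurableSet_Icc]
    filter_upwards with t ht
    simp only [Set.mem_Icc] at ht
    have htR : |t| ≤ R := abs_le.mpr ⟨ht.1, ht.2⟩
    have : ‖|t| ^ j * |ψ t|‖ = |t| ^ j * |ψ t| := by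
      rw [Real.norm_eq_abs, abs_of_nonneg (by positivity)]
    rw [this, Real.norm_eq_abs]
    exact mul_le_mul_of_nonneg_right (pow_le_pow_left₀ (abs_nonneg t) htR j) (abs_nonneg _)
  have hbnd : ∀ t : ℝ, R ≤ |t| → |t| ^ j * |ψ t| ≤ |C| * |t| ^ ((j:ℝ) - θ) := by
    intro t ht
    have ht0 : (0:ℝ) < |t| := lt_of_lt_of_le hR ht
    have h1 : |ψ t| ≤ |C| * |t| ^ (-θ) :=
      le_trans (hC t ht) (mul_le_mul_of_nonneg_right (le_abs_self C) (by positivity))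
    calc |t| ^ j * |ψ t| ≤ |t| ^ j * (|C| * |t| ^ (-θ)) :=
          mul_le_mul_of_nonneg_left h1 (by positivity)
      _ = |C| * (|t| ^ ((j:ℝ)) * |t| ^ (-θ)) := by rw [← Real.rpow_natCast |t| j]; ring
      _ = |C| * |t| ^ ((j:ℝ) - θ) := by rw [← Real.rpow_add ht0]; ring_nf
  have hpos : IntegrableOn (fun t : ℝ => |t| ^ j * |ψ t|) (Set.Ioi R) volume := by
    refine Integrable.mono' (htail.const_mul |C|) hmeas.restrict ?_
    rw [ae_restrict_iff' measurableSet_Ioi]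
    filter_upwards with t ht
    simp only [Set.mem_Ioi] at ht
    have ht0 : (0:ℝ) < t := lt_trans hR ht
    have : |t| = t := abs_of_pos ht0
    rw [Real.norm_eq_abs, abs_of_nonneg (by positivity)]
    calc |t| ^ j * |ψ t| ≤ |C| * |t| ^ ((j:ℝ) - θ) := hbnd t (by rw [this]; exact ht.le)
      _ = |C| * t ^ ((j:ℝ) - θ) := by rw [this]
  have hneg : IntegrableOn (fun t : ℝ => |t| ^ j * |ψ t|) (Set.Iio (-R)) volume := by
    refine Integrable.mono' (htailneg.const_mul |C|) hmeas.restrict ?_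
    rw [ae_restrict_iff' measurableSet_Iio]
    filter_upwards with t ht
    simp only [Set.mem_Iio] at ht
    have ht0 : t < 0 := by linarith
    have habs : |t| = -t := abs_of_neg ht0
    rw [Real.norm_eq_abs, abs_of_nonneg (by positivity)]
    calc |t| ^ j * |ψ t| ≤ |C| * |t| ^ ((j:ℝ) - θ) := hbnd t (by rw [habs]; linarith)
      _ = |C| * (-t) ^ ((j:ℝ) - θ) := by rw [habs]
  exact hmid.union (hneg.union hpos)

/-- Integrability of the signed moments. -/
lemma durrAux_psi_poly {ψ : ℝ → ℝ} (hψ : IsContinuousKernel ψ) {θ : ℝ}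
    (hd : CondTheta ψ θ) {j : ℕ} (hj : (j:ℝ) + 1 < θ) :
    Integrable (fun t : ℝ => t ^ j * ψ t) := by
  refine Integrable.mono' (durrAux_psi_moment hψ hd hj) ?_ ?_
  · exact (continuous_pow j).aestronglyMeasurable.mul hψ.integrable.aestronglyMeasurable
  · filter_upwards with t
    rw [Real.norm_eq_abs, abs_mul, abs_pow]

end AuxLemmas3
section AuxTaylor

lemma durrAux_abs_int (r : ℕ) (c : ℝ) :
    |∫ s in (0:ℝ)..c, |s| ^ r| = |c| ^ (r + 1) / (r + 1) := by
  rcases le_or_gt 0 c with h | h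
  · have h1 : ∫ s in (0:ℝ)..c, |s| ^ r = ∫ s in (0:ℝ)..c, s ^ r := by
      apply intervalIntegral.integral_congr
      intro s hs
      rw [Set.uIcc_of_le h] at hs
      show |s| ^ r = s ^ r
      rw [abs_of_nonneg hs.1]
    rw [h1, integral_pow, zero_pow (Nat.succ_ne_zero r), sub_zero, abs_div, abs_pow,
      abs_of_nonneg (by positivity : (0:ℝ) ≤ (r:ℝ) + 1)]
  · have h1 : ∫ s in (0:ℝ)..c, |s| ^ r = ∫ s in (0:ℝ)..c, (-s) ^ r := by
      apply intervalIntegral.integral_congr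
      intro s hs
      rw [Set.uIcc_of_ge h.le] at hs
      show |s| ^ r = (-s) ^ r
      rw [abs_of_nonpos hs.2]
    have h2 : ∫ s in (0:ℝ)..c, (-s) ^ r = ∫ s in (-c)..(0:ℝ), s ^ r := by
      have := intervalIntegral.integral_comp_neg (a := (0:ℝ)) (b := c) (f := fun s : ℝ => s ^ r)
      simpa using this
    rw [h1, h2, integral_pow, abs_of_neg h]
    have hc0 : (0:ℝ) < -c := by linarith
    have h3 : (0:ℝ) ^ (r + 1) - (-c) ^ (r + 1) = -((-c) ^ (r + 1)) := by
      rw [zero_pow (Nat.succ_ne_zero r)]; ring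
    rw [h3, abs_div, abs_neg, abs_of_nonneg (by positivity : (0:ℝ) ≤ (-c) ^ (r+1)),
      abs_of_nonneg (by positivity : (0:ℝ) ≤ ((r:ℝ) + 1))]

lemma durrAux_taylor (r : ℕ) (g : ℝ → ℝ) (x : ℝ)
    (hd : ∀ i < r, Differentiable ℝ (iteratedDeriv i g))
    (hc : ∀ i ≤ r, Continuous (iteratedDeriv i g))
    (M : ℝ) (hM : ∀ y : ℝ, |iteratedDeriv r g y| ≤ M) (u : ℝ) :
    |g u - ∑ i ∈ Finset.range r, iteratedDeriv i g x * (u - x) ^ i / (Nat.factorial i)| ≤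
      M * |u - x| ^ r / (Nat.factorial r) := by
  induction r generalizing g u with
  | zero => simpa [iteratedDeriv_zero] using hM u
  | succ r ih =>
    have hg : Differentiable ℝ g := by
      have := hd 0 (Nat.succ_pos r); rwa [iteratedDeriv_zero] at this
    have hd' : ∀ i < r, Differentiable ℝ (iteratedDeriv i (deriv g)) := by
      intro i hi; rw [← iteratedDeriv_succ']; exact hd (i + 1) (by omega)
    have hc' : ∀ i ≤ r, Continuous (iteratedDeriv i (deriv g)) := by
      intro i hi; rw [← iteratedDeriv_succ']; exact hc (i + 1) (by omega)
    have hM' : ∀ y : ℝ, |iteratedDeriv r (deriv g) y| ≤ M := by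
      intro y; rw [← iteratedDeriv_succ']; exact hM y
    have hM0 : 0 ≤ M := le_trans (abs_nonneg _) (hM x)
    set D : ℝ → ℝ := fun t =>
      deriv g t - ∑ i ∈ Finset.range r, iteratedDeriv i (deriv g) x * (t - x) ^ i /
        (Nat.factorial i) with hD
    have hIH : ∀ t : ℝ, |D t| ≤ M * |t - x| ^ r / (Nat.factorial r) :=
      fun t => ih (deriv g) hd' hc' hM' t
    set F : ℝ → ℝ := fun t =>
      g t - ∑ i ∈ Finset.range (r + 1), iteratedDeriv i g x * (t - x) ^ i /
        (Nat.factorial i) with hF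
    have hFderiv : ∀ t : ℝ, HasDerivAt F (D t) t := by
      intro t
      have hP : HasDerivAt (fun t : ℝ => ∑ i ∈ Finset.range (r + 1),
          iteratedDeriv i g x * (t - x) ^ i / (Nat.factorial i))
          (∑ i ∈ Finset.range (r + 1),
            iteratedDeriv i g x * ((i : ℝ) * (t - x) ^ (i - 1) * 1) / (Nat.factorial i)) t := by
        apply HasDerivAt.fun_sum
        intro i _
        exact ((((hasDerivAt_id t).sub_const x).pow i).const_mul _).div_const _
      have hsum : (∑ i ∈ Finset.range (r + 1),
          iteratedDeriv i g x * ((i : ℝ) * (t - x) ^ (i - 1) * 1) / (Nat.factorial i)) =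
          ∑ i ∈ Finset.range r, iteratedDeriv i (deriv g) x * (t - x) ^ i /
            (Nat.factorial i) := by
        rw [Finset.sum_range_succ']
        simp only [Nat.cast_zero, zero_mul, mul_zero, zero_div, add_zero, Nat.factorial_zero]
        apply Finset.sum_congr rfl
        intro i _
        rw [← iteratedDeriv_succ', Nat.factorial_succ, Nat.add_sub_cancel]
        have hne : ((i:ℝ) + 1) ≠ 0 := by positivity
        push_cast
        field_simp
      have := (hg.differentiableAt.hasDerivAt).sub (hsum ▸ hP)
      exact this
    have hDcont : Continuous D := by
      have h1 : Continuous (deriv g) := by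
        have := hc 1 (by omega); rwa [iteratedDeriv_one] at this
      apply h1.sub
      apply continuous_finset_sum
      intro i _
      exact ((continuous_const.mul ((continuous_id.sub continuous_const).pow i)).div_const _)
    have hFx : F x = 0 := by
      have hzero : ∑ i ∈ Finset.range (r + 1),
          iteratedDeriv i g x * (x - x) ^ i / (Nat.factorial i) = g x := by
        rw [Finset.sum_eq_single 0]
        · simp [iteratedDeriv_zero]
        · intro i _ hi; simp [sub_self, zero_pow hi]
        · intro h; exact absurd (Finset.mem_range.mpr (Nat.succ_pos r)) h
      show g x - ∑ i ∈ Finset.range (r + 1),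
        iteratedDeriv i g x * (x - x) ^ i / (Nat.factorial i) = 0
      rw [hzero, sub_self]
    have hint : ∫ t in x..u, D t = F u - F x :=
      intervalIntegral.integral_eq_sub_of_hasDerivAt (fun t _ => hFderiv t)
        (hDcont.intervalIntegrable x u)
    have hbound : ‖∫ t in x..u, D t‖ ≤
        |∫ t in x..u, M * |t - x| ^ r / (Nat.factorial r)| := by
      apply intervalIntegral.norm_integral_le_abs_of_norm_le
      · filter_upwards with t
        rw [Real.norm_eq_abs]
        exact hIH t
      · exact (((continuous_const.mul ((continuous_id.sub continuous_const).abs.pow r)).div_const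
          _)).intervalIntegrable x u
    have hval : |∫ t in x..u, M * |t - x| ^ r / (Nat.factorial r)| =
        M * |u - x| ^ (r + 1) / (Nat.factorial (r + 1)) := by
      have h1 : (fun t : ℝ => M * |t - x| ^ r / (Nat.factorial r)) =
          fun t : ℝ => (M / (Nat.factorial r)) * |t - x| ^ r := by
        funext t; ring
      rw [h1, intervalIntegral.integral_const_mul]
      have h2 : ∫ t in x..u, |t - x| ^ r = ∫ s in (0:ℝ)..(u - x), |s| ^ r := by
        have := intervalIntegral.integral_comp_sub_right (a := x) (b := u)
          (fun s : ℝ => |s| ^ r) x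
        rw [this, sub_self]
      rw [abs_mul, h2, durrAux_abs_int]
      rw [abs_div, abs_of_nonneg hM0, abs_of_nonneg (by positivity : (0:ℝ) ≤ (Nat.factorial r : ℝ))]
      rw [Nat.factorial_succ]
      have hfac : (0:ℝ) < (Nat.factorial r : ℝ) := by positivity
      have hr1 : (0:ℝ) < (r:ℝ) + 1 := by positivity
      push_cast
      rw [div_mul_div_comm]
      rw [div_eq_div_iff (by positivity) (by positivity)]
      ring
    have hFu : |F u| ≤ M * |u - x| ^ (r + 1) / (Nat.factorial (r + 1)) := by
      have := hbound
      rw [hint, hFx, sub_zero, Real.norm_eq_abs, hval] at this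
      exact this
    exact hFu

end AuxTaylor
section AuxBridge

lemma durrAux_ofReal_le_eLpNormTop {f : ℝ → ℝ} (hf : Continuous f) (y : ℝ) :
    ENNReal.ofReal |f y| ≤ eLpNorm f ⊤ volume := by
  rw [eLpNorm_exponent_top]
  by_contra hcon
  push_neg at hcon
  set c := eLpNormEssSup f volume with hc
  have hae : ∀ᵐ z : ℝ, (‖f z‖₊ : ℝ≥0∞) ≤ c := ae_le_eLpNormEssSup
  have hopen : IsOpen {z : ℝ | c < (‖f z‖₊ : ℝ≥0∞)} := by
    have hcont : Continuous fun z : ℝ => (‖f z‖₊ : ℝ≥0∞) :=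
      ENNReal.continuous_coe.comp hf.nnnorm
    exact isOpen_lt continuous_const hcont
  have hzero : volume {z : ℝ | c < (‖f z‖₊ : ℝ≥0∞)} = 0 := by
    rw [ae_iff] at hae
    simpa only [not_le] using hae
  have hy : y ∈ {z : ℝ | c < (‖f z‖₊ : ℝ≥0∞)} := by
    simp only [Set.mem_setOf_eq]
    have heq : (‖f y‖₊ : ℝ≥0∞) = ENNReal.ofReal |f y| := by
      rw [← Real.norm_eq_abs]; exact (ofReal_norm _).symm
    rw [heq]
    exact hcon
  exact absurd hzero (hopen.measure_pos volume ⟨y, hy⟩).ne'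

lemma durrAux_discMoment_zero {φ : ℝ → ℝ} (hφ : IsDiscreteKernel φ) (u : ℝ) :
    discMoment φ 0 u = 1 := by
  unfold discMoment
  simp only [pow_zero, mul_one]
  exact (hφ.partition u).tsum_eq

lemma durrAux_contMoment_zero {ψ : ℝ → ℝ} (hψ : IsContinuousKernel ψ) :
    contMoment ψ 0 = 1 := by
  unfold contMoment
  simp only [pow_zero, one_mul]
  exact hψ.integral_one

lemma durrAux_cov {w : ℝ} (hw : 0 < w) (ψ g : ℝ → ℝ) (k : ℤ) :
    w * ∫ u : ℝ, ψ (w * u - k) * g u = ∫ t : ℝ, ψ t * g ((t + k) / w) := by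
  have h1 : (fun u : ℝ => ψ (w * u - k) * g u) =
      fun u : ℝ => (fun y : ℝ => ψ (y - k) * g (y / w)) (w * u) := by
    funext u
    simp only
    congr 2
    rw [mul_comm, mul_div_assoc, div_self hw.ne', mul_one]
  rw [h1, MeasureTheory.Measure.integral_comp_mul_left (fun y : ℝ => ψ (y - k) * g (y / w)) w]
  rw [abs_of_pos (inv_pos.mpr hw), smul_eq_mul, ← mul_assoc, mul_inv_cancel₀ hw.ne', one_mul]
  have h2 : (fun y : ℝ => ψ (y - k) * g (y / w)) =
      fun y : ℝ => (fun t : ℝ => ψ t * g ((t + k) / w)) (y - k) := by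
    funext y
    simp only
    rw [sub_add_cancel]
  rw [h2]
  exact MeasureTheory.integral_sub_right_eq_self (fun t : ℝ => ψ t * g ((t + k) / w)) (k : ℝ)

end AuxBridge
section AuxCore

/-- Step A: rewriting the operator after a change of variables. -/
lemma durrAux_stepA {w : ℝ} (hw : 0 < w) (φ ψ g : ℝ → ℝ) (x : ℝ) :
    durr φ ψ w g x = ∑' k : ℤ, φ (w * x - k) * ∫ t : ℝ, ψ t * g ((t + k) / w) := by
  unfold durr
  apply tsum_congr
  intro k
  rw [durrAux_cov hw ψ g k]

/-- Binomial expansion of the Taylor polynomial against the kernel. -/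
lemma durrAux_expand {w : ℝ} (hw : 0 < w) (ψ g : ℝ → ℝ) (r : ℕ) (x : ℝ) (k : ℤ) :
    (fun t : ℝ => ψ t * (∑ i ∈ Finset.range r,
        iteratedDeriv i g x * ((t + k) / w - x) ^ i / (Nat.factorial i))) =
      fun t : ℝ => ∑ i ∈ Finset.range r, ∑ ν ∈ Finset.range (i + 1),
        (iteratedDeriv i g x / (Nat.factorial i) * (1 / w) ^ i * (i.choose ν : ℝ) *
          ((k : ℝ) - w * x) ^ (i - ν)) * (t ^ ν * ψ t) := by
  funext t
  rw [Finset.mul_sum]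
  apply Finset.sum_congr rfl
  intro i _
  have harg : (t + k) / w - x = (t + ((k : ℝ) - w * x)) / w := by
    field_simp
    ring
  rw [harg]
  calc ψ t * (iteratedDeriv i g x * ((t + ((k:ℝ) - w * x)) / w) ^ i / (Nat.factorial i))
      = (iteratedDeriv i g x / (Nat.factorial i) * (1 / w) ^ i) *
          ((t + ((k:ℝ) - w * x)) ^ i * ψ t) := by
        rw [div_pow]
        ring
    _ = (iteratedDeriv i g x / (Nat.factorial i) * (1 / w) ^ i) *
          ((∑ ν ∈ Finset.range (i + 1),
            t ^ ν * ((k:ℝ) - w * x) ^ (i - ν) * (i.choose ν : ℝ)) * ψ t) := by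
        rw [add_pow]
    _ = ∑ ν ∈ Finset.range (i + 1),
          (iteratedDeriv i g x / (Nat.factorial i) * (1 / w) ^ i * (i.choose ν : ℝ) *
            ((k : ℝ) - w * x) ^ (i - ν)) * (t ^ ν * ψ t) := by
        rw [Finset.sum_mul, Finset.mul_sum]
        apply Finset.sum_congr rfl
        intro ν _
        ring

end AuxCore
section AuxMain

lemma durrAux_pointwise_real (r : ℕ) (hr : 1 < r) (φ ψ : ℝ → ℝ)
    (hφ : IsDiscreteKernel φ) (hψ : IsContinuousKernel ψ)
    (hi : AssumptionI φ r) (hii : AssumptionII φ ψ r)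
    (θφ θψ : ℝ) (hθφ : (r : ℝ) + 1 < θφ) (hθψ : (r : ℝ) + 1 < θψ)
    (hφθ : CondTheta φ θφ) (hψθ : CondTheta ψ θψ)
    (g : ℝ → ℝ) (hg : MemCr r g) (w : ℝ) (hw : 0 < w) (x : ℝ)
    (M : ℝ) (hM : ∀ y : ℝ, |iteratedDeriv r g y| ≤ M) :
    |durr φ ψ w g x - g x| ≤ M / (w ^ r * (Nat.factorial r : ℝ)) *
      ∑ ν ∈ Finset.range (r + 1), (r.choose ν : ℝ) *
        (∑' k : ℤ, |φ (w * x - k)| * |w * x - k| ^ (r - ν)) *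
        (∫ t : ℝ, |t| ^ ν * |ψ t|) := by
  -- abbreviations
  set A : ℤ → ℝ := fun k => ∑ i ∈ Finset.range r, ∑ ν ∈ Finset.range (i + 1),
    (iteratedDeriv i g x / (Nat.factorial i) * (1 / w) ^ i * (i.choose ν : ℝ) *
      ((k : ℝ) - w * x) ^ (i - ν)) * contMoment ψ ν with hAdef
  set E : ℤ → ℝ := fun k => ∫ t : ℝ, ψ t * (g ((t + k) / w) -
    ∑ i ∈ Finset.range r, iteratedDeriv i g x * ((t + k) / w - x) ^ i /
      (Nat.factorial i)) with hEdef
  -- basic facts about g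
  have hM0 : 0 ≤ M := le_trans (abs_nonneg _) (hM x)
  have hgc : Continuous g := by
    have := (hg.2 0 (Nat.zero_le r)).1.continuous
    rwa [iteratedDeriv_zero] at this
  obtain ⟨Mg, hMg0⟩ := (hg.2 0 (Nat.zero_le r)).2
  have hMg : ∀ y : ℝ, |g y| ≤ Mg := by
    intro y
    have := hMg0 y
    rwa [iteratedDeriv_zero] at this
  have hTb : ∀ y : ℝ, |g y - ∑ i ∈ Finset.range r,
      iteratedDeriv i g x * (y - x) ^ i / (Nat.factorial i)| ≤
      M * |y - x| ^ r / (Nat.factorial r) :=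
    durrAux_taylor r g x hg.1 (fun i hi' => (hg.2 i hi').1.continuous) M hM
  -- discrete kernel sums
  have hθφ0 : 0 < θφ := lt_of_le_of_lt (by positivity) hθφ
  obtain ⟨K, hK0, hKd⟩ := durrAux_decay hθφ0 hφ.bounded hφθ
  have hφsum : ∀ j : ℕ, j ≤ r →
      Summable (fun k : ℤ => |φ (w * x - k)| * |w * x - k| ^ j) := by
    intro j hj
    have hj' : (j : ℝ) + 1 < θφ := by
      have : (j : ℝ) ≤ (r : ℝ) := Nat.cast_le.mpr hj
      linarith
    obtain ⟨B, _, hB⟩ := durrAux_phi_sum hK0 hKd hj'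
    exact (hB (w * x)).1
  have habs : ∀ (j : ℕ) (k : ℤ), |φ (w * x - k) * ((k : ℝ) - w * x) ^ j| =
      |φ (w * x - k)| * |w * x - k| ^ j := by
    intro j k
    rw [abs_mul, abs_pow, abs_sub_comm ((k : ℝ)) (w * x)]
  have hsumac : ∀ j : ℕ, j ≤ r →
      Summable (fun k : ℤ => φ (w * x - k) * ((k : ℝ) - w * x) ^ j) := by
    intro j hj
    apply Summable.of_abs
    exact ((hφsum j hj).congr (fun k => (habs j k).symm))
  -- continuous kernel moments
  have hψmom : ∀ ν : ℕ, ν ≤ r → Integrable (fun t : ℝ => |t| ^ ν * |ψ t|) := by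
    intro ν hν
    refine durrAux_psi_moment hψ hψθ ?_
    have : (ν : ℝ) ≤ (r : ℝ) := Nat.cast_le.mpr hν
    linarith
  have hψpoly : ∀ ν : ℕ, ν ≤ r → Integrable (fun t : ℝ => t ^ ν * ψ t) := by
    intro ν hν
    refine durrAux_psi_poly hψ hψθ ?_
    have : (ν : ℝ) ≤ (r : ℝ) := Nat.cast_le.mpr hν
    linarith
  -- integrability of pieces
  have hTint : ∀ k : ℤ, Integrable (fun t : ℝ => ψ t * (∑ i ∈ Finset.range r,
      iteratedDeriv i g x * ((t + k) / w - x) ^ i / (Nat.factorial i))) := by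
    intro k
    rw [durrAux_expand hw ψ g r x k]
    apply integrable_finset_sum
    intro i hi'
    apply integrable_finset_sum
    intro ν hν
    have hνr : ν ≤ r := by
      have h1 := Finset.mem_range.mp hi'
      have h2 := Finset.mem_range.mp hν
      omega
    exact (hψpoly ν hνr).const_mul _
  have hTval : ∀ k : ℤ, (∫ t : ℝ, ψ t * (∑ i ∈ Finset.range r,
      iteratedDeriv i g x * ((t + k) / w - x) ^ i / (Nat.factorial i))) = A k := by
    intro k
    rw [durrAux_expand hw ψ g r x k]
    have hin : ∀ i ∈ Finset.range r, ∀ ν ∈ Finset.range (i + 1), ν ≤ r := by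
      intro i hi' ν hν
      have h1 := Finset.mem_range.mp hi'
      have h2 := Finset.mem_range.mp hν
      omega
    rw [integral_finset_sum _ (fun i hi' => integrable_finset_sum _
      (fun ν hν => (hψpoly ν (hin i hi' ν hν)).const_mul _))]
    rw [hAdef]
    apply Finset.sum_congr rfl
    intro i hi'
    rw [integral_finset_sum _ (fun ν hν => (hψpoly ν (hin i hi' ν hν)).const_mul _)]
    apply Finset.sum_congr rfl
    intro ν hν
    rw [integral_const_mul]
    rfl
  have hgint : ∀ k : ℤ, Integrable (fun t : ℝ => ψ t * g ((t + k) / w)) := by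
    intro k
    refine Integrable.mono' (hψ.integrable.norm.const_mul Mg) ?_ ?_
    · exact hψ.integrable.aestronglyMeasurable.mul
        ((hgc.comp ((continuous_id.add continuous_const).div_const w)).aestronglyMeasurable)
    · filter_upwards with t
      rw [norm_mul]
      calc ‖ψ t‖ * ‖g ((t + k) / w)‖ ≤ ‖ψ t‖ * Mg := by
            apply mul_le_mul_of_nonneg_left _ (norm_nonneg _)
            rw [Real.norm_eq_abs]
            exact hMg _
        _ = Mg * ‖ψ t‖ := mul_comm _ _
  have hRmint : ∀ k : ℤ, Integrable (fun t : ℝ => ψ t * (g ((t + k) / w) -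
      ∑ i ∈ Finset.range r, iteratedDeriv i g x * ((t + k) / w - x) ^ i /
        (Nat.factorial i))) := by
    intro k
    have heq : (fun t : ℝ => ψ t * (g ((t + k) / w) -
        ∑ i ∈ Finset.range r, iteratedDeriv i g x * ((t + k) / w - x) ^ i /
          (Nat.factorial i))) =
        fun t : ℝ => ψ t * g ((t + k) / w) - ψ t * (∑ i ∈ Finset.range r,
          iteratedDeriv i g x * ((t + k) / w - x) ^ i / (Nat.factorial i)) := by
      funext t
      ring
    rw [heq]
    exact (hgint k).sub (hTint k)
  have hJsplit : ∀ k : ℤ, (∫ t : ℝ, ψ t * g ((t + k) / w)) = A k + E k := by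
    intro k
    have h2 : (fun t : ℝ => ψ t * g ((t + k) / w)) =
        fun t : ℝ => ψ t * (∑ i ∈ Finset.range r,
          iteratedDeriv i g x * ((t + k) / w - x) ^ i / (Nat.factorial i)) +
          ψ t * (g ((t + k) / w) - ∑ i ∈ Finset.range r,
            iteratedDeriv i g x * ((t + k) / w - x) ^ i / (Nat.factorial i)) := by
      funext t
      ring
    rw [h2, integral_add (hTint k) (hRmint k), hTval k, hEdef]
  -- rearrangement of a_k * A k
  have hAk : ∀ k : ℤ, φ (w * x - k) * A k =
      ∑ i ∈ Finset.range r, ∑ ν ∈ Finset.range (i + 1),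
        (iteratedDeriv i g x / (Nat.factorial i) * (1 / w) ^ i * (i.choose ν : ℝ) *
          contMoment ψ ν) * (φ (w * x - k) * ((k : ℝ) - w * x) ^ (i - ν)) := by
    intro k
    rw [hAdef, Finset.mul_sum]
    apply Finset.sum_congr rfl
    intro i _
    rw [Finset.mul_sum]
    apply Finset.sum_congr rfl
    intro ν _
    ring
  have hinr : ∀ i ∈ Finset.range r, ∀ ν ∈ Finset.range (i + 1), i - ν ≤ r := by
    intro i hi' ν hν
    have h1 := Finset.mem_range.mp hi'
    omega
  have hsumA : Summable (fun k : ℤ => φ (w * x - k) * A k) := by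
    refine Summable.congr ?_ (fun k => (hAk k).symm)
    apply summable_sum
    intro i hi'
    apply summable_sum
    intro ν hν
    exact (hsumac (i - ν) (hinr i hi' ν hν)).mul_left _
  -- evaluation of the A part
  have hAval : (∑' k : ℤ, φ (w * x - k) * A k) = g x := by
    rw [tsum_congr hAk]
    rw [Summable.tsum_finsetSum (fun i hi' => summable_sum
      (fun ν hν => (hsumac (i - ν) (hinr i hi' ν hν)).mul_left _))]
    have hswap : ∀ i ∈ Finset.range r,
        (∑' k : ℤ, ∑ ν ∈ Finset.range (i + 1),
          (iteratedDeriv i g x / (Nat.factorial i) * (1 / w) ^ i * (i.choose ν : ℝ) *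
            contMoment ψ ν) * (φ (w * x - k) * ((k : ℝ) - w * x) ^ (i - ν))) =
        ∑ ν ∈ Finset.range (i + 1),
          (iteratedDeriv i g x / (Nat.factorial i) * (1 / w) ^ i * (i.choose ν : ℝ) *
            contMoment ψ ν) * discMoment φ (i - ν) (w * x) := by
      intro i hi'
      rw [Summable.tsum_finsetSum (fun ν hν => (hsumac (i - ν) (hinr i hi' ν hν)).mul_left _)]
      apply Finset.sum_congr rfl
      intro ν hν
      rw [tsum_mul_left]
      rfl
    rw [Finset.sum_congr rfl hswap]
    rw [Finset.sum_eq_single 0]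
    · rw [Finset.sum_range_one]
      rw [durrAux_discMoment_zero hφ, durrAux_contMoment_zero hψ]
      simp [iteratedDeriv_zero]
    · intro i hi' hne
      have h1le : 1 ≤ i := Nat.one_le_iff_ne_zero.mpr hne
      have hile : i ≤ r - 1 := Nat.le_pred_of_lt (Finset.mem_range.mp hi')
      have hcongr : ∀ ν ∈ Finset.range (i + 1),
          (iteratedDeriv i g x / (Nat.factorial i) * (1 / w) ^ i * (i.choose ν : ℝ) *
            contMoment ψ ν) * discMoment φ (i - ν) (w * x) =
          (iteratedDeriv i g x / (Nat.factorial i) * (1 / w) ^ i * (i.choose ν : ℝ) *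
            contMoment ψ ν) * discMoment φ (i - ν) 0 := by
        intro ν hν
        congr 1
        rcases Nat.lt_or_ge ν i with hlt | hge
        · exact hi (i - ν) (by omega) (by omega) (w * x) 0
        · have hνi : ν = i := by
            have := Finset.mem_range.mp hν
            omega
          rw [hνi, Nat.sub_self, durrAux_discMoment_zero hφ, durrAux_discMoment_zero hφ]
      rw [Finset.sum_congr rfl hcongr]
      have hfactor : ∑ ν ∈ Finset.range (i + 1),
          (iteratedDeriv i g x / (Nat.factorial i) * (1 / w) ^ i * (i.choose ν : ℝ) *
            contMoment ψ ν) * discMoment φ (i - ν) 0 =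
          (iteratedDeriv i g x / (Nat.factorial i) * (1 / w) ^ i) *
            ∑ ν ∈ Finset.range (i + 1),
              (i.choose ν : ℝ) * discMoment φ (i - ν) 0 * contMoment ψ ν := by
        rw [Finset.mul_sum]
        apply Finset.sum_congr rfl
        intro ν _
        ring
      rw [hfactor, hii i h1le hile, mul_zero]
    · intro h
      exact absurd (Finset.mem_range.mpr (by omega)) h
  -- bound on the remainder integrals
  have hEbound : ∀ k : ℤ, |E k| ≤ ∑ ν ∈ Finset.range (r + 1),
      (M / (w ^ r * (Nat.factorial r : ℝ)) *
        ((r.choose ν : ℝ) * |(k : ℝ) - w * x| ^ (r - ν))) *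
      (∫ t : ℝ, |t| ^ ν * |ψ t|) := by
    intro k
    have hmemν : ∀ ν ∈ Finset.range (r + 1), ν ≤ r := fun ν hν => by
      have := Finset.mem_range.mp hν
      omega
    have hptw : ∀ t : ℝ, ‖ψ t * (g ((t + k) / w) - ∑ i ∈ Finset.range r,
        iteratedDeriv i g x * ((t + k) / w - x) ^ i / (Nat.factorial i))‖ ≤
        ∑ ν ∈ Finset.range (r + 1),
          (M / (w ^ r * (Nat.factorial r : ℝ)) *
            ((r.choose ν : ℝ) * |(k : ℝ) - w * x| ^ (r - ν))) * (|t| ^ ν * |ψ t|) := by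
      intro t
      rw [norm_mul, Real.norm_eq_abs, Real.norm_eq_abs]
      have h1 := hTb ((t + k) / w)
      have harg : (t + k) / w - x = (t + ((k : ℝ) - w * x)) / w := by
        field_simp
        ring
      have h2 : |(t + k) / w - x| ^ r = |t + ((k : ℝ) - w * x)| ^ r / w ^ r := by
        rw [harg, abs_div, abs_of_pos hw, div_pow]
      have h3 : |t + ((k : ℝ) - w * x)| ^ r ≤ (|t| + |(k : ℝ) - w * x|) ^ r :=
        pow_le_pow_left₀ (abs_nonneg _) (abs_add_le _ _) r
      calc |ψ t| * |g ((t + k) / w) - ∑ i ∈ Finset.range r,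
            iteratedDeriv i g x * ((t + k) / w - x) ^ i / (Nat.factorial i)|
          ≤ |ψ t| * (M * |(t + k) / w - x| ^ r / (Nat.factorial r)) :=
            mul_le_mul_of_nonneg_left h1 (abs_nonneg _)
        _ = M / (w ^ r * (Nat.factorial r : ℝ)) * |t + ((k : ℝ) - w * x)| ^ r * |ψ t| := by
            rw [h2]
            ring
        _ ≤ M / (w ^ r * (Nat.factorial r : ℝ)) * (|t| + |(k : ℝ) - w * x|) ^ r * |ψ t| := by
            apply mul_le_mul_of_nonneg_right _ (abs_nonneg _)
            exact mul_le_mul_of_nonneg_left h3 (by positivity)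
        _ = ∑ ν ∈ Finset.range (r + 1),
              (M / (w ^ r * (Nat.factorial r : ℝ)) *
                ((r.choose ν : ℝ) * |(k : ℝ) - w * x| ^ (r - ν))) * (|t| ^ ν * |ψ t|) := by
            rw [add_pow, Finset.mul_sum, Finset.sum_mul]
            apply Finset.sum_congr rfl
            intro ν _
            ring
    have hGint : Integrable (fun t : ℝ => ∑ ν ∈ Finset.range (r + 1),
        (M / (w ^ r * (Nat.factorial r : ℝ)) *
          ((r.choose ν : ℝ) * |(k : ℝ) - w * x| ^ (r - ν))) * (|t| ^ ν * |ψ t|)) :=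
      integrable_finset_sum _ (fun ν hν => (hψmom ν (hmemν ν hν)).const_mul _)
    calc |E k| ≤ ∫ t : ℝ, ‖ψ t * (g ((t + k) / w) - ∑ i ∈ Finset.range r,
          iteratedDeriv i g x * ((t + k) / w - x) ^ i / (Nat.factorial i))‖ := by
          rw [hEdef, ← Real.norm_eq_abs]
          exact norm_integral_le_integral_norm _
      _ ≤ ∫ t : ℝ, ∑ ν ∈ Finset.range (r + 1),
            (M / (w ^ r * (Nat.factorial r : ℝ)) *
              ((r.choose ν : ℝ) * |(k : ℝ) - w * x| ^ (r - ν))) * (|t| ^ ν * |ψ t|) :=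
          integral_mono_of_nonneg (Filter.Eventually.of_forall fun t => norm_nonneg _)
            hGint (Filter.Eventually.of_forall hptw)
      _ = ∑ ν ∈ Finset.range (r + 1),
            (M / (w ^ r * (Nat.factorial r : ℝ)) *
              ((r.choose ν : ℝ) * |(k : ℝ) - w * x| ^ (r - ν))) *
            (∫ t : ℝ, |t| ^ ν * |ψ t|) := by
          rw [integral_finset_sum _ (fun ν hν => (hψmom ν (hmemν ν hν)).const_mul _)]
          apply Finset.sum_congr rfl
          intro ν _
          rw [integral_const_mul]
  -- summability of the error part
  have hmemν' : ∀ ν ∈ Finset.range (r + 1), r - ν ≤ r := fun ν hν => by omega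
  have hae : ∀ k : ℤ, |φ (w * x - k) * E k| ≤ ∑ ν ∈ Finset.range (r + 1),
      (M / (w ^ r * (Nat.factorial r : ℝ)) * ((r.choose ν : ℝ) *
        (∫ t : ℝ, |t| ^ ν * |ψ t|))) * (|φ (w * x - k)| * |w * x - k| ^ (r - ν)) := by
    intro k
    rw [abs_mul]
    calc |φ (w * x - k)| * |E k|
        ≤ |φ (w * x - k)| * ∑ ν ∈ Finset.range (r + 1),
            (M / (w ^ r * (Nat.factorial r : ℝ)) *
              ((r.choose ν : ℝ) * |(k : ℝ) - w * x| ^ (r - ν))) *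
            (∫ t : ℝ, |t| ^ ν * |ψ t|) :=
          mul_le_mul_of_nonneg_left (hEbound k) (abs_nonneg _)
      _ = ∑ ν ∈ Finset.range (r + 1),
            (M / (w ^ r * (Nat.factorial r : ℝ)) * ((r.choose ν : ℝ) *
              (∫ t : ℝ, |t| ^ ν * |ψ t|))) *
            (|φ (w * x - k)| * |w * x - k| ^ (r - ν)) := by
          rw [Finset.mul_sum]
          apply Finset.sum_congr rfl
          intro ν _
          rw [abs_sub_comm ((k : ℝ)) (w * x)]
          ring
  have hsumbound : Summable (fun k : ℤ => ∑ ν ∈ Finset.range (r + 1),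
      (M / (w ^ r * (Nat.factorial r : ℝ)) * ((r.choose ν : ℝ) *
        (∫ t : ℝ, |t| ^ ν * |ψ t|))) * (|φ (w * x - k)| * |w * x - k| ^ (r - ν))) :=
    summable_sum (fun ν hν => ((hφsum (r - ν) (hmemν' ν hν)).mul_left _))
  have hsumabsE : Summable (fun k : ℤ => |φ (w * x - k) * E k|) :=
    Summable.of_nonneg_of_le (fun k => abs_nonneg _) hae hsumbound
  have hsumE : Summable (fun k : ℤ => φ (w * x - k) * E k) := hsumabsE.of_abs
  -- the decomposition
  have hdecomp : durr φ ψ w g x = g x + ∑' k : ℤ, φ (w * x - k) * E k := by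
    rw [durrAux_stepA hw φ ψ g x]
    have h1 : ∀ k : ℤ, φ (w * x - k) * (∫ t : ℝ, ψ t * g ((t + k) / w)) =
        φ (w * x - k) * A k + φ (w * x - k) * E k := by
      intro k
      rw [hJsplit k]
      ring
    rw [tsum_congr h1, Summable.tsum_add hsumA hsumE, hAval]
  rw [hdecomp, add_sub_cancel_left]
  -- final estimate
  calc |∑' k : ℤ, φ (w * x - k) * E k| ≤ ∑' k : ℤ, |φ (w * x - k) * E k| := by
        rw [← Real.norm_eq_abs]
        refine (norm_tsum_le_tsum_norm ?_).trans_eq ?_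
        · exact hsumabsE.congr fun k => (Real.norm_eq_abs _).symm
        · exact tsum_congr fun k => Real.norm_eq_abs _
    _ ≤ ∑' k : ℤ, ∑ ν ∈ Finset.range (r + 1),
          (M / (w ^ r * (Nat.factorial r : ℝ)) * ((r.choose ν : ℝ) *
            (∫ t : ℝ, |t| ^ ν * |ψ t|))) * (|φ (w * x - k)| * |w * x - k| ^ (r - ν)) :=
        Summable.tsum_le_tsum hae hsumabsE hsumbound
    _ = ∑ ν ∈ Finset.range (r + 1),
          (M / (w ^ r * (Nat.factorial r : ℝ)) * ((r.choose ν : ℝ) *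
            (∫ t : ℝ, |t| ^ ν * |ψ t|))) *
          (∑' k : ℤ, |φ (w * x - k)| * |w * x - k| ^ (r - ν)) := by
        rw [Summable.tsum_finsetSum (fun ν hν => (hφsum (r - ν) (hmemν' ν hν)).mul_left _)]
        apply Finset.sum_congr rfl
        intro ν _
        rw [tsum_mul_left]
    _ = M / (w ^ r * (Nat.factorial r : ℝ)) *
          ∑ ν ∈ Finset.range (r + 1), (r.choose ν : ℝ) *
            (∑' k : ℤ, |φ (w * x - k)| * |w * x - k| ^ (r - ν)) *
            (∫ t : ℝ, |t| ^ ν * |ψ t|) := by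
        rw [Finset.mul_sum]
        apply Finset.sum_congr rfl
        intro ν _
        ring

end AuxMain
/-- Pointwise estimate for `g ∈ C^r(ℝ)`:
`|(D_w^{φ,ψ} g)(x) − g(x)| ≤ (‖g^{(r)}‖_∞/(w^r r!)) Σ_{ν=0}^{r} C(r,ν) M_{r−ν}(φ) M̃_ν(ψ)`,
and the constant is finite. -/
theorem durr_pointwise_estimate_Cr (r : ℕ) (hr : 1 < r) (φ ψ : ℝ → ℝ)
    (hφ : IsDiscreteKernel φ) (hψ : IsContinuousKernel ψ)
    (hi : AssumptionI φ r) (hii : AssumptionII φ ψ r)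
    (θφ θψ : ℝ) (hθφ : (r : ℝ) + 1 < θφ) (hθψ : (r : ℝ) + 1 < θψ)
    (hφθ : CondTheta φ θφ) (hψθ : CondTheta ψ θψ) :
    (∑ ν ∈ Finset.range (r + 1),
        (r.choose ν : ℝ≥0∞) * discAbsMoment φ ((r - ν : ℕ) : ℝ) * contAbsMoment ψ (ν : ℝ)) < ⊤ ∧
    ∀ g : ℝ → ℝ, MemCr r g → ∀ w : ℝ, 0 < w → ∀ x : ℝ,
      ENNReal.ofReal |durr φ ψ w g x - g x| ≤
        lpN ⊤ (iteratedDeriv r g) / ENNReal.ofReal (w ^ r * (Nat.factorial r : ℝ)) *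
          ∑ ν ∈ Finset.range (r + 1),
            (r.choose ν : ℝ≥0∞) * discAbsMoment φ ((r - ν : ℕ) : ℝ) * contAbsMoment ψ (ν : ℝ) := by
  have hr0 : 0 < r := by omega
  have hθφ0 : 0 < θφ := lt_of_le_of_lt (by positivity) hθφ
  obtain ⟨K, hK0, hKd⟩ := durrAux_decay hθφ0 hφ.bounded hφθ
  have hcastφ : ∀ j : ℕ, j ≤ r → (j : ℝ) + 1 < θφ := by
    intro j hj
    have : (j : ℝ) ≤ (r : ℝ) := Nat.cast_le.mpr hj
    linarith
  have hcastψ : ∀ j : ℕ, j ≤ r → (j : ℝ) + 1 < θψ := by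
    intro j hj
    have : (j : ℝ) ≤ (r : ℝ) := Nat.cast_le.mpr hj
    linarith
  have hψmomint : ∀ ν : ℕ, ν ≤ r → Integrable (fun t : ℝ => |t| ^ ν * |ψ t|) :=
    fun ν hν => durrAux_psi_moment hψ hψθ (hcastψ ν hν)
  -- discrete absolute moments
  have hkey : ∀ j : ℕ, j ≤ r → (discAbsMoment φ (j : ℝ) ≠ ⊤ ∧
      ∀ u : ℝ, ENNReal.ofReal (∑' k : ℤ, |φ (u - k)| * |u - k| ^ j) ≤
        discAbsMoment φ (j : ℝ)) := by
    intro j hj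
    obtain ⟨B, hB0, hB⟩ := durrAux_phi_sum hK0 hKd (hcastφ j hj)
    have hpt : ∀ u : ℝ, (∑' k : ℤ, ENNReal.ofReal (|φ (u - k)| * |u - (k : ℝ)| ^ ((j : ℕ) : ℝ)))
        = ENNReal.ofReal (∑' k : ℤ, |φ (u - k)| * |u - k| ^ j) := by
      intro u
      have h1 : ∀ k : ℤ, ENNReal.ofReal (|φ (u - k)| * |u - (k : ℝ)| ^ ((j : ℕ) : ℝ)) =
          ENNReal.ofReal (|φ (u - k)| * |u - k| ^ j) := fun k => by rw [Real.rpow_natCast]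
      rw [tsum_congr h1, ENNReal.ofReal_tsum_of_nonneg (fun k => by positivity) (hB u).1]
    constructor
    · have hle : discAbsMoment φ (j : ℝ) ≤ ENNReal.ofReal B := by
        unfold discAbsMoment
        apply iSup_le
        intro u
        rw [hpt u]
        exact ENNReal.ofReal_le_ofReal (hB u).2
      exact (lt_of_le_of_lt hle ENNReal.ofReal_lt_top).ne
    · intro u
      unfold discAbsMoment
      rw [← hpt u]
      exact le_iSup (fun u : ℝ => ∑' k : ℤ,
        ENNReal.ofReal (|φ (u - k)| * |u - (k : ℝ)| ^ ((j : ℕ) : ℝ))) u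
  -- continuous absolute moments
  have hcont_eq : ∀ ν : ℕ, ν ≤ r →
      contAbsMoment ψ (ν : ℝ) = ENNReal.ofReal (∫ t : ℝ, |t| ^ ν * |ψ t|) := by
    intro ν hν
    unfold contAbsMoment
    have h1 : ∀ u : ℝ, ENNReal.ofReal (|u| ^ ((ν : ℕ) : ℝ) * |ψ u|) =
        ENNReal.ofReal (|u| ^ ν * |ψ u|) := fun u => by rw [Real.rpow_natCast]
    rw [lintegral_congr h1]
    exact (MeasureTheory.ofReal_integral_eq_lintegral_ofReal (hψmomint ν hν)
      (Filter.Eventually.of_forall fun t => by positivity)).symm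
  have hmemν : ∀ ν ∈ Finset.range (r + 1), ν ≤ r := by
    intro ν hν
    have := Finset.mem_range.mp hν
    omega
  constructor
  · -- finiteness of the constant
    apply ENNReal.sum_lt_top.mpr
    intro ν hν
    have hν' : ν ≤ r := hmemν ν hν
    apply ENNReal.mul_lt_top
    · apply ENNReal.mul_lt_top
      · exact (ENNReal.natCast_ne_top _).lt_top
      · exact ((hkey (r - ν) (by omega)).1).lt_top
    · rw [hcont_eq ν hν']
      exact ENNReal.ofReal_lt_top
  · -- the pointwise estimate
    intro g hg w hw x
    have hgrc : Continuous (iteratedDeriv r g) := (hg.2 r le_rfl).1.continuous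
    obtain ⟨Mg, hMgb⟩ := (hg.2 r le_rfl).2
    set L := lpN ⊤ (iteratedDeriv r g) with hL
    have hLne : L ≠ ⊤ := by
      rw [hL]
      unfold lpN
      rw [eLpNorm_exponent_top]
      refine (lt_of_le_of_lt (eLpNormEssSup_le_of_ae_bound (C := Mg) ?_)
        ENNReal.ofReal_lt_top).ne
      filter_upwards with y
      rw [Real.norm_eq_abs]
      exact hMgb y
    have hMle : ∀ y : ℝ, |iteratedDeriv r g y| ≤ L.toReal := by
      intro y
      have h1 : ENNReal.ofReal |iteratedDeriv r g y| ≤ L :=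
        durrAux_ofReal_le_eLpNormTop hgrc y
      exact (ENNReal.ofReal_le_iff_le_toReal hLne).mp h1
    have hreal := durrAux_pointwise_real r hr φ ψ hφ hψ hi hii θφ θψ hθφ hθψ hφθ hψθ
      g hg w hw x L.toReal hMle
    have hW : (0 : ℝ) < w ^ r * (Nat.factorial r : ℝ) := by positivity
    have ht0 : ∀ ν : ℕ, (0:ℝ) ≤ ∑' k : ℤ, |φ (w * x - k)| * |w * x - k| ^ (r - ν) :=
      fun ν => tsum_nonneg fun k => by positivity
    have hi0 : ∀ ν : ℕ, (0:ℝ) ≤ ∫ t : ℝ, |t| ^ ν * |ψ t| :=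
      fun ν => integral_nonneg fun t => by positivity
    have hterm : ∀ ν ∈ Finset.range (r + 1),
        ENNReal.ofReal ((r.choose ν : ℝ) *
          (∑' k : ℤ, |φ (w * x - k)| * |w * x - k| ^ (r - ν)) *
          (∫ t : ℝ, |t| ^ ν * |ψ t|)) ≤
        (r.choose ν : ℝ≥0∞) * discAbsMoment φ ((r - ν : ℕ) : ℝ) * contAbsMoment ψ (ν : ℝ) := by
      intro ν hν
      have hν' : ν ≤ r := hmemν ν hν
      rw [ENNReal.ofReal_mul (mul_nonneg (Nat.cast_nonneg _) (ht0 ν)),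
        ENNReal.ofReal_mul (Nat.cast_nonneg _)]
      refine mul_le_mul' (mul_le_mul' ?_ ?_) ?_
      · exact le_of_eq (ENNReal.ofReal_natCast _)
      · exact (hkey (r - ν) (by omega)).2 (w * x)
      · rw [hcont_eq ν hν']
    calc ENNReal.ofReal |durr φ ψ w g x - g x|
        ≤ ENNReal.ofReal (L.toReal / (w ^ r * (Nat.factorial r : ℝ)) *
            ∑ ν ∈ Finset.range (r + 1), (r.choose ν : ℝ) *
              (∑' k : ℤ, |φ (w * x - k)| * |w * x - k| ^ (r - ν)) *
              (∫ t : ℝ, |t| ^ ν * |ψ t|)) := ENNReal.ofReal_le_ofReal hreal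
      _ = ENNReal.ofReal (L.toReal / (w ^ r * (Nat.factorial r : ℝ))) *
            ∑ ν ∈ Finset.range (r + 1), ENNReal.ofReal ((r.choose ν : ℝ) *
              (∑' k : ℤ, |φ (w * x - k)| * |w * x - k| ^ (r - ν)) *
              (∫ t : ℝ, |t| ^ ν * |ψ t|)) := by
          rw [ENNReal.ofReal_mul (by positivity)]
          congr 1
          exact ENNReal.ofReal_sum_of_nonneg fun ν _ =>
            mul_nonneg (mul_nonneg (by positivity) (ht0 ν)) (hi0 ν)
      _ ≤ (L / ENNReal.ofReal (w ^ r * (Nat.factorial r : ℝ))) *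
            ∑ ν ∈ Finset.range (r + 1),
              (r.choose ν : ℝ≥0∞) * discAbsMoment φ ((r - ν : ℕ) : ℝ) *
                contAbsMoment ψ (ν : ℝ) := by
          refine mul_le_mul' ?_ (Finset.sum_le_sum hterm)
          rw [ENNReal.ofReal_div_of_pos hW]
          exact ENNReal.div_le_div_right ENNReal.ofReal_toReal_le _
end
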